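/- arXiv:1402.3618 — 6 statements merged into one kernel-verified Lean document; each statement's English description precedes it below -/
import Mathlib

section
/- Let C be an abelian category and V a resolving subcategory of C satisfying the syzygy hypothesis. Let g : F → G be a morphism in C where F has finite V-dimension, and let 0 → G_N → ⋯ → G_1 → G_0 → G → 0 be an exact sequence in C. Then there exist an exact sequence 0 → L_M → ⋯ → L_1 → L_0 → F → 0 with every L_i an object of V, and a morphism of chain complexes g_• : L_• → G_• (with g_i = 0 for i > N) such that g ∘ (L_0 → F) = (G_0 → G) ∘ g_0. -/
open CategoryTheory CategoryTheory.Limits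

variable {C : Type*} [Category C] [Abelian C]

/-- `V` is a resolving subcategory of the abelian category `C`: it is an
isomorphism-closed full subcategory (encoded as a predicate on objects) that is closed
under finite direct sums (including the empty one, i.e. it contains the zero objects),
direct summands and extensions, such that the kernel of every epimorphism between
objects of `V` lies in `V`, and such that every object of `C` admits an epimorphism
from an object of `V`. -/
structure IsResolving (V : C → Prop) : Prop where
  iso_closed : ∀ {X Y : C}, (X ≅ Y) → V X → V Y
  zero_mem : ∀ X : C, IsZero X → V X
  sum_closed : ∀ X Y : C, V X → V Y → V (X ⊞ Y)
  summand_closed : ∀ (X Y : C) (i : Y ⟶ X) (r : X ⟶ Y), i ≫ r = 𝟙 Y → V X → V Y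
  ext_closed : ∀ S : ShortComplex C, S.ShortExact → V S.X₁ → V S.X₃ → V S.X₂
  ker_of_epi_mem : ∀ S : ShortComplex C, S.ShortExact → V S.X₂ → V S.X₃ → V S.X₁
  epi_from : ∀ X : C, ∃ (P : C) (p : P ⟶ X), V P ∧ Epi p

/-- `(L, ε)` is a `V`-resolution of `M`: an exact sequence
`⋯ → L₁ → L₀ → M → 0` with all `Lᵢ` in `V`. -/
structure IsVResolution (V : C → Prop) (M : C) (L : ChainComplex C ℕ)
    (ε : L.X 0 ⟶ M) : Prop where
  mem : ∀ n : ℕ, V (L.X n)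
  epi : Epi ε
  comp_zero : L.d 1 0 ≫ ε = 0
  exact_zero : (ShortComplex.mk (L.d 1 0) ε comp_zero).Exact
  exact : ∀ n : ℕ, L.ExactAt (n + 1)

/-- `M` has finite `V`-dimension: it admits a `V`-resolution with `Lᵢ = 0`
for all large `i`. -/
def HasFiniteVDim (V : C → Prop) (M : C) : Prop :=
  ∃ (L : ChainComplex C ℕ) (ε : L.X 0 ⟶ M),
    IsVResolution V M L ε ∧ ∃ N : ℕ, ∀ n : ℕ, N < n → IsZero (L.X n)

/-- The syzygy hypothesis: for every object `F` of finite `V`-dimension and every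
`V`-resolution `E` of `F`, the cycles `ker (Eₙ₊₁ → Eₙ)` lie in `V` for all
sufficiently large `n`. -/
def SyzygyHyp (V : C → Prop) : Prop :=
  ∀ (F : C) (E : ChainComplex C ℕ) (ε : E.X 0 ⟶ F),
    HasFiniteVDim V F → IsVResolution V F E ε →
      ∃ N : ℕ, ∀ n : ℕ, N ≤ n → V (kernel (E.d (n + 1) n))

namespace Stmt1Aux

open ZeroObject

lemma exists_V_lift {V : C → Prop} (hV : IsResolving V) {A B X : C} (p : A ⟶ B) (hp : Epi p)
    (f : X ⟶ B) : ∃ (L : C) (q : L ⟶ X) (l : L ⟶ A), V L ∧ Epi q ∧ l ≫ p = q ≫ f := by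
  haveI := hp
  obtain ⟨P, e, hP, he⟩ := hV.epi_from (pullback f p)
  haveI := he
  refine ⟨P, e ≫ pullback.fst f p, e ≫ pullback.snd f p, hP, epi_comp _ _, ?_⟩
  rw [Category.assoc, Category.assoc, ← pullback.condition]

lemma epi_kernel_lift_of_eq {X Y Z : C} (f : X ⟶ Y) (g : Y ⟶ Z) (w : f ≫ g = 0)
    (q : X ⟶ kernel g) (hq : q ≫ kernel.ι g = f) (h : Epi q) : Epi (kernel.lift g f w) := by
  have : kernel.lift g f w = q := by
    rw [← cancel_mono (kernel.ι g)]
    simp [hq]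
  rw [this]; exact h

lemma exact_mk_of_eq {X Y Z : C} {f f' : X ⟶ Y} {g g' : Y ⟶ Z} (hf : f = f') (hg : g = g')
    (w : f ≫ g = 0) (w' : f' ≫ g' = 0) (h : (ShortComplex.mk f g w).Exact) :
    (ShortComplex.mk f' g' w').Exact := by
  subst hf; subst hg; exact h

/-- Bundled data of the target exact sequence. -/
structure TgtData (G' : ChainComplex C ℕ) (G : C) where
  ε : G'.X 0 ⟶ G
  hε0 : G'.d 1 0 ≫ ε = 0
  hε_epi : Epi ε
  hex0 : (ShortComplex.mk (G'.d 1 0) ε hε0).Exact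
  hex : ∀ n : ℕ, G'.ExactAt (n + 1)

variable {G' : ChainComplex C ℕ} {G : C}

/-- Codomains of the "augmented differential". -/
abbrev ZW (G' : ChainComplex C ℕ) (G : C) : ℕ → C
  | 0 => G
  | n + 1 => G'.X n

/-- The augmented differential. -/
def zeta (T : TgtData G' G) : ∀ n, G'.X n ⟶ ZW G' G n
  | 0 => T.ε
  | n + 1 => G'.d (n + 1) n

lemma d_zeta (T : TgtData G' G) (n : ℕ) : G'.d (n + 1) n ≫ zeta T n = 0 := by
  cases n with
  | zero => exact T.hε0
  | succ k => exact G'.d_comp_d _ _ _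

/-- Cycles of the target (with `Zc 0 = G`). -/
noncomputable def Zc (T : TgtData G' G) : ℕ → C
  | 0 => G
  | n + 1 => kernel (zeta T n)

/-- Inclusion of cycles. -/
noncomputable def iZ (T : TgtData G' G) : ∀ n, Zc T n ⟶ ZW G' G n
  | 0 => 𝟙 G
  | n + 1 => kernel.ι (zeta T n)

/-- Projection onto cycles. -/
noncomputable def piZ (T : TgtData G' G) : ∀ n, G'.X n ⟶ Zc T n
  | 0 => T.ε
  | n + 1 => kernel.lift (zeta T n) (G'.d (n + 1) n) (d_zeta T n)

lemma piZ_iZ (T : TgtData G' G) (n : ℕ) : piZ T n ≫ iZ T n = zeta T n := by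
  cases n with
  | zero => exact Category.comp_id _
  | succ k => exact kernel.lift_ι _ _ _

lemma epi_piZ (T : TgtData G' G) (n : ℕ) : Epi (piZ T n) := by
  cases n with
  | zero => exact T.hε_epi
  | succ k =>
    cases k with
    | zero => exact (ShortComplex.exact_iff_epi_kernel_lift _).1 T.hex0
    | succ j =>
      have h := (HomologicalComplex.exactAt_iff' G' (j + 2) (j + 1) j (by simp)
        (by simp)).1 (T.hex j)
      exact (ShortComplex.exact_iff_epi_kernel_lift _).1 h

/-- The state of the construction at stage `n`. -/
abbrev StT (T : TgtData G' G) (n : ℕ) : Type _ := Σ' (K : C), K ⟶ Zc T n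

variable (V : C → Prop)

/-- Choice of a `V`-cover compatible with the comparison map. -/
noncomputable def pick (hV : IsResolving V) (T : TgtData G' G) (n : ℕ) (s : StT T n) :
    Σ' (L : C) (q : L ⟶ s.1) (l : L ⟶ G'.X n), V L ∧ Epi q ∧ l ≫ piZ T n = q ≫ s.2 :=
  Classical.choice (by
    obtain ⟨L, q, l, h1, h2, h3⟩ := exists_V_lift hV (piZ T n) (epi_piZ T n) s.2
    exact ⟨⟨L, q, l, h1, h2, h3⟩⟩)

/-- One step of the construction. -/
noncomputable abbrev step (hV : IsResolving V) (T : TgtData G' G) (n : ℕ) (s : StT T n) :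
    StT T (n + 1) :=
  ⟨kernel (pick V hV T n s).2.1,
    kernel.lift (zeta T n) (kernel.ι (pick V hV T n s).2.1 ≫ (pick V hV T n s).2.2.1) (by
      have h3 := (pick V hV T n s).2.2.2.2.2
      rw [← piZ_iZ T n, Category.assoc, reassoc_of% h3, kernel.condition_assoc, zero_comp])⟩

/-- The whole sequence of states. -/
noncomputable abbrev st (hV : IsResolving V) (T : TgtData G' G) (F : C) (g : F ⟶ G) :
    ∀ n, StT T n :=
  fun n => Nat.rec (motive := fun n => StT T n) ⟨F, g⟩ (step V hV T) n

variable (hV : IsResolving V) (T : TgtData G' G) (F : C) (g : F ⟶ G)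

/-- The objects of the resolution. -/
noncomputable abbrev LL (n : ℕ) : C := (pick V hV T n (st V hV T F g n)).1

/-- The epimorphism onto the current syzygy. -/
noncomputable abbrev qq (n : ℕ) : LL V hV T F g n ⟶ (st V hV T F g n).1 :=
  (pick V hV T n (st V hV T F g n)).2.1

/-- The comparison map. -/
noncomputable def ll (n : ℕ) : LL V hV T F g n ⟶ G'.X n :=
  (pick V hV T n (st V hV T F g n)).2.2.1

lemma V_LL (n : ℕ) : V (LL V hV T F g n) :=
  (pick V hV T n (st V hV T F g n)).2.2.2.1

lemma epi_qq (n : ℕ) : Epi (qq V hV T F g n) :=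
  (pick V hV T n (st V hV T F g n)).2.2.2.2.1

lemma ll_pi (n : ℕ) :
    ll V hV T F g n ≫ piZ T n = qq V hV T F g n ≫ (st V hV T F g n).2 :=
  (pick V hV T n (st V hV T F g n)).2.2.2.2.2

/-- The resolution complex. -/
noncomputable abbrev Lc : ChainComplex C ℕ :=
  ChainComplex.of (LL V hV T F g)
    (fun n => qq V hV T F g (n + 1) ≫ kernel.ι (qq V hV T F g n))
    (fun n => by rw [Category.assoc, kernel.condition_assoc, zero_comp, comp_zero])

lemma Lc_d (n : ℕ) :
    (Lc V hV T F g).d (n + 1) n = qq V hV T F g (n + 1) ≫ kernel.ι (qq V hV T F g n) :=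
  ChainComplex.of_d _ (fun n => qq V hV T F g (n + 1) ≫ kernel.ι (qq V hV T F g n)) n

lemma res : IsVResolution V F (Lc V hV T F g) (qq V hV T F g 0) := by
  refine ⟨fun n => V_LL V hV T F g n, epi_qq V hV T F g 0, ?_, ?_, ?_⟩
  · rw [Lc_d, Category.assoc, kernel.condition, comp_zero]
  · rw [ShortComplex.exact_iff_epi_kernel_lift]
    exact epi_kernel_lift_of_eq _ _ _ (qq V hV T F g 1) (Lc_d V hV T F g 0).symm
      (epi_qq V hV T F g 1)
  · intro n
    rw [HomologicalComplex.exactAt_iff' _ (n + 2) (n + 1) n (by simp) (by simp)]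
    refine exact_mk_of_eq (Lc_d V hV T F g (n + 1)).symm (Lc_d V hV T F g n).symm
      (by rw [Category.assoc, kernel.condition_assoc, zero_comp, comp_zero]) _ ?_
    rw [ShortComplex.exact_iff_epi_kernel_lift]
    refine epi_kernel_lift_of_eq _ _ _
      (qq V hV T F g (n + 2) ≫
        (kernelCompMono (qq V hV T F g (n + 1)) (kernel.ι (qq V hV T F g n))).inv) ?_ ?_
    · simp [kernelCompMono]
    · haveI := epi_qq V hV T F g (n + 2)
      exact epi_comp _ _

/-- The comparison chain map. -/
noncomputable def phi : Lc V hV T F g ⟶ G' where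
  f n := ll V hV T F g n
  comm' := by
    intro i j hij
    obtain rfl : j + 1 = i := hij
    have h2 : (st V hV T F g (j + 1)).2 ≫ iZ T (j + 1) =
        kernel.ι (qq V hV T F g j) ≫ ll V hV T F g j := kernel.lift_ι _ _ _
    calc ll V hV T F g (j + 1) ≫ G'.d (j + 1) j
        = (ll V hV T F g (j + 1) ≫ piZ T (j + 1)) ≫ iZ T (j + 1) := by
          rw [Category.assoc, piZ_iZ]; rfl
      _ = (qq V hV T F g (j + 1) ≫ (st V hV T F g (j + 1)).2) ≫ iZ T (j + 1) := by
          rw [ll_pi]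
      _ = qq V hV T F g (j + 1) ≫ kernel.ι (qq V hV T F g j) ≫ ll V hV T F g j := by
          rw [Category.assoc, h2]
      _ = (Lc V hV T F g).d (j + 1) j ≫ ll V hV T F g j := by
          rw [Lc_d, Category.assoc]

lemma eps_g : qq V hV T F g 0 ≫ g = ll V hV T F g 0 ≫ T.ε :=
  (ll_pi V hV T F g 0).symm

section Trunc

variable (L : ChainComplex C ℕ) (m : ℕ)

/-- Objects of the truncated complex. -/
noncomputable def truncX (i : ℕ) : C :=
  if i ≤ m + 1 then L.X i else if i = m + 2 then kernel (L.d (m + 1) m) else 0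

lemma truncX_low {i : ℕ} (h : i ≤ m + 1) : truncX L m i = L.X i := if_pos h

lemma truncX_top : truncX L m (m + 2) = kernel (L.d (m + 1) m) := by
  unfold truncX
  rw [if_neg (by omega : ¬ (m + 2 ≤ m + 1)), if_pos rfl]

lemma truncX_zero {i : ℕ} (h : m + 2 < i) : truncX L m i = 0 := by
  unfold truncX
  rw [if_neg (by omega : ¬ (i ≤ m + 1)), if_neg (by omega : ¬ (i = m + 2))]

/-- Differentials of the truncated complex. -/
noncomputable def truncd (i : ℕ) : truncX L m (i + 1) ⟶ truncX L m i :=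
  if h : i + 1 ≤ m + 1 then
    eqToHom (truncX_low L m h) ≫ L.d (i + 1) i ≫ eqToHom (truncX_low L m (by omega)).symm
  else if h2 : i + 1 = m + 2 then
    eqToHom (by rw [h2]; exact truncX_top L m) ≫ kernel.ι (L.d (m + 1) m) ≫
      eqToHom (show L.X (m + 1) = truncX L m i by
        rw [show i = m + 1 by omega]; exact (truncX_low L m le_rfl).symm)
  else 0

lemma truncd_sq (i : ℕ) : truncd L m (i + 1) ≫ truncd L m i = 0 := by
  by_cases h1 : i + 2 ≤ m + 1
  · simp only [truncd]
    rw [dif_pos h1, dif_pos (show i + 1 ≤ m + 1 by omega)]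
    simp
  · by_cases h2 : i + 2 = m + 2
    · have hi : i = m := by omega
      subst hi
      simp [truncd, h1]
    · simp only [truncd]; rw [dif_neg h1, dif_neg (by omega : ¬ (i + 2 = m + 2)), zero_comp]

/-- The truncated complex. -/
noncomputable abbrev trunc : ChainComplex C ℕ :=
  ChainComplex.of (truncX L m) (truncd L m) (truncd_sq L m)

lemma trunc_d (i : ℕ) : (trunc L m).d (i + 1) i = truncd L m i :=
  ChainComplex.of_d _ _ i

end Trunc

lemma exists_trunc {V : C → Prop} (hV : IsResolving V) {F : C} {Gc : ChainComplex C ℕ}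
    (L : ChainComplex C ℕ) (εL : L.X 0 ⟶ F) (hres : IsVResolution V F L εL)
    (φ : L ⟶ Gc) (m N : ℕ) (hm : V (kernel (L.d (m + 1) m))) (hNm : N ≤ m)
    (hGN : ∀ i, N < i → IsZero (Gc.X i)) (hφ : ∀ i, N < i → φ.f i = 0) :
    ∃ (L' : ChainComplex C ℕ) (εL' : L'.X 0 ⟶ F) (φ' : L' ⟶ Gc),
      IsVResolution V F L' εL' ∧ (∀ i, m + 2 < i → IsZero (L'.X i)) ∧
      (∀ i, N < i → φ'.f i = 0) ∧
      ∃ (e : L'.X 0 = L.X 0), εL' = eqToHom e ≫ εL ∧ φ'.f 0 = eqToHom e ≫ φ.f 0 := by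
  haveI := hres.epi
  have e0 : truncX L m 0 = L.X 0 := truncX_low L m (by omega)
  refine ⟨trunc L m, eqToHom e0 ≫ εL,
    { f := fun i => if h : i ≤ m + 1 then eqToHom (truncX_low L m h) ≫ φ.f i else 0
      comm' := ?_ }, ⟨?_, ?_, ?_, ?_, ?_⟩, ?_, ?_, e0, rfl, ?_⟩
  · -- chain map condition
    intro i j hij
    obtain rfl : j + 1 = i := hij
    dsimp only
    by_cases h : j + 1 ≤ m + 1
    · rw [dif_pos h, dif_pos (show j ≤ m + 1 by omega), ChainComplex.of_d]
      unfold truncd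
      rw [dif_pos h]
      simp
    · have hz : IsZero (Gc.X j) := hGN j (by omega)
      exact hz.eq_of_tgt _ _
  · -- membership in V
    intro n
    show V (truncX L m n)
    rcases lt_trichotomy n (m + 2) with h | h | h
    · rw [truncX_low L m (by omega)]; exact hres.mem n
    · rw [h, truncX_top]; exact hm
    · exact hV.zero_mem _ (by rw [truncX_zero L m h]; exact isZero_zero C)
  · -- epi
    exact epi_comp _ _
  · -- comp_zero
    show (trunc L m).d (0 + 1) 0 ≫ (eqToHom e0 ≫ εL) = 0
    rw [trunc_d]; unfold truncd
    rw [dif_pos (show 0 + 1 ≤ m + 1 by omega)]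
    simp [hres.comp_zero]
  · -- exact_zero
    refine (ShortComplex.exact_iff_of_iso
      (ShortComplex.isoMk (eqToIso (truncX_low L m (by omega : 1 ≤ m + 1)))
        (eqToIso e0) (Iso.refl F) ?_ ?_)).2 hres.exact_zero
    · show eqToHom (truncX_low L m (by omega : 1 ≤ m + 1)) ≫ L.d 1 0 =
          (trunc L m).d (0 + 1) 0 ≫ eqToHom e0
      rw [trunc_d]; unfold truncd
      rw [dif_pos (show 0 + 1 ≤ m + 1 by omega)]
      simp
    · simp
  · -- exactness
    intro n
    by_cases h1 : n + 2 ≤ m + 1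
    · rw [HomologicalComplex.exactAt_iff' _ (n + 1 + 1) (n + 1) n (by simp) (by simp)]
      refine (ShortComplex.exact_iff_of_iso
        (ShortComplex.isoMk (eqToIso (truncX_low L m (show n + 1 + 1 ≤ m + 1 by omega)))
          (eqToIso (truncX_low L m (by omega))) (eqToIso (truncX_low L m (by omega)))
          ?_ ?_)).2
        ((HomologicalComplex.exactAt_iff' L (n + 1 + 1) (n + 1) n (by simp) (by simp)).1
          (hres.exact n))
      · show eqToHom (truncX_low L m (show n + 1 + 1 ≤ m + 1 by omega)) ≫
            L.d (n + 1 + 1) (n + 1) =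
            (trunc L m).d (n + 1 + 1) (n + 1) ≫ eqToHom (truncX_low L m (by omega))
        rw [trunc_d]; unfold truncd
        rw [dif_pos (show n + 1 + 1 ≤ m + 1 by omega)]
        simp
      · show eqToHom (truncX_low L m (show n + 1 ≤ m + 1 by omega)) ≫ L.d (n + 1) n =
            (trunc L m).d (n + 1) n ≫ eqToHom (truncX_low L m (by omega))
        rw [trunc_d]; unfold truncd
        rw [dif_pos (show n + 1 ≤ m + 1 by omega)]
        simp
    · by_cases h2 : n = m
      · subst h2
        rw [HomologicalComplex.exactAt_iff' _ (n + 1 + 1) (n + 1) n (by simp) (by simp)]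
        refine (ShortComplex.exact_iff_of_iso
          (ShortComplex.isoMk (eqToIso (truncX_top L n))
            (eqToIso (truncX_low L n (by omega))) (eqToIso (truncX_low L n (by omega)))
            ?_ ?_ :
            _ ≅ ShortComplex.mk (kernel.ι (L.d (n + 1) n)) (L.d (n + 1) n)
              (kernel.condition _))).2 ?_
        · show eqToHom (truncX_top L n) ≫ kernel.ι (L.d (n + 1) n) =
              (trunc L n).d (n + 1 + 1) (n + 1) ≫ eqToHom (truncX_low L n (by omega))
          rw [trunc_d]; unfold truncd
          rw [dif_neg (by omega : ¬ n + 1 + 1 ≤ n + 1),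
            dif_pos (show n + 1 + 1 = n + 2 by omega)]
          simp
        · show eqToHom (truncX_low L n (by omega)) ≫ L.d (n + 1) n =
              (trunc L n).d (n + 1) n ≫ eqToHom (truncX_low L n (by omega))
          rw [trunc_d]; unfold truncd
          rw [dif_pos (show n + 1 ≤ n + 1 by omega)]
          simp
        · -- exactness of kernel.ι ≫ d
          rw [ShortComplex.exact_iff_epi_kernel_lift]
          exact epi_kernel_lift_of_eq _ _ _ (𝟙 _) (Category.id_comp _)
            inferInstance
      · -- n ≥ m + 1
        by_cases h3 : n = m + 1
        · subst h3
          rw [HomologicalComplex.exactAt_iff' _ (m + 1 + 1 + 1) (m + 1 + 1) (m + 1)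
            (by simp) (by simp)]
          rw [ShortComplex.exact_iff_mono _
            (show (trunc L m).d (m + 1 + 1 + 1) (m + 1 + 1) = 0 by
              rw [trunc_d]; unfold truncd
              rw [dif_neg (by omega : ¬ m + 1 + 1 + 1 ≤ m + 1),
                dif_neg (by omega : ¬ m + 1 + 1 + 1 = m + 2)])]
          show Mono ((trunc L m).d (m + 1 + 1) (m + 1))
          rw [trunc_d]; unfold truncd
          rw [dif_neg (by omega : ¬ m + 1 + 1 ≤ m + 1),
            dif_pos (show m + 1 + 1 = m + 2 by omega)]
          infer_instance
        · rw [HomologicalComplex.exactAt_iff]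
          refine ShortComplex.exact_of_isZero_X₂ _ ?_
          show IsZero (truncX L m (n + 1))
          rw [truncX_zero L m (by omega)]
          exact isZero_zero C
  · -- vanishing of objects
    intro i hi
    show IsZero (truncX L m i)
    rw [truncX_zero L m hi]
    exact isZero_zero C
  · -- vanishing of the chain map
    intro i hi
    dsimp only
    by_cases h : i ≤ m + 1
    · rw [dif_pos h, hφ i hi, comp_zero]
    · rw [dif_neg h]
  · -- compatibility at degree 0
    dsimp only
    rw [dif_pos (show (0 : ℕ) ≤ m + 1 by omega)]

end Stmt1Aux

/-- Let `C` be an abelian category and `V` a resolving subcategory of `C`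
satisfying the syzygy hypothesis.  Let `g : F ⟶ G` be a morphism in `C` where `F` has
finite `V`-dimension, and let `0 → G_N → ⋯ → G₁ → G₀ → G → 0` be an exact sequence in
`C`.  Then there exist an exact sequence `0 → L_M → ⋯ → L₁ → L₀ → F → 0` with every
`Lᵢ` in `V` and a morphism of chain complexes `φ : L ⟶ G'` (with `φ.f i = 0` for
`i > N`) such that `εL ≫ g = φ.f 0 ≫ ε`. -/
theorem stmt_1 {C : Type*} [Category C] [Abelian C]
    (V : C → Prop) (hV : IsResolving V) (hSyz : SyzygyHyp V)
    {F G : C} (g : F ⟶ G) (hF : HasFiniteVDim V F)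
    (G' : ChainComplex C ℕ) (N : ℕ) (hGN : ∀ i : ℕ, N < i → IsZero (G'.X i))
    (ε : G'.X 0 ⟶ G) (hε0 : G'.d 1 0 ≫ ε = 0) (hε_epi : Epi ε)
    (hG_exact0 : (ShortComplex.mk (G'.d 1 0) ε hε0).Exact)
    (hG_exact : ∀ n : ℕ, G'.ExactAt (n + 1)) :
    ∃ (L : ChainComplex C ℕ) (εL : L.X 0 ⟶ F) (φ : L ⟶ G') (M : ℕ),
      IsVResolution V F L εL ∧
      (∀ i : ℕ, M < i → IsZero (L.X i)) ∧
      (∀ i : ℕ, N < i → φ.f i = 0) ∧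
      εL ≫ g = φ.f 0 ≫ ε := by
  classical
  let T : Stmt1Aux.TgtData G' G := ⟨ε, hε0, hε_epi, hG_exact0, hG_exact⟩
  obtain ⟨N₁, hN₁⟩ := hSyz F (Stmt1Aux.Lc V hV T F g) (Stmt1Aux.qq V hV T F g 0) hF
    (Stmt1Aux.res V hV T F g)
  have hkm : V (kernel ((Stmt1Aux.Lc V hV T F g).d (N₁ + N + 1) (N₁ + N))) :=
    hN₁ (N₁ + N) (by omega)
  have hφ0 : ∀ i, N < i → (Stmt1Aux.phi V hV T F g).f i = 0 := fun i hi =>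
    (hGN i hi).eq_of_tgt _ _
  obtain ⟨L', εL', φ', h1, h2, h3, e, he1, he2⟩ :=
    Stmt1Aux.exists_trunc hV (Stmt1Aux.Lc V hV T F g) (Stmt1Aux.qq V hV T F g 0)
      (Stmt1Aux.res V hV T F g) (Stmt1Aux.phi V hV T F g) (N₁ + N) N hkm (by omega) hGN hφ0
  refine ⟨L', εL', φ', N₁ + N + 2, h1, h2, h3, ?_⟩
  rw [he1, he2, Category.assoc, Category.assoc]
  congr 1
  exact Stmt1Aux.eps_g V hV T F g
end

section
/- Let C be an abelian category and V a full subcategory of C such that every object of C admits an epimorphism from an object of V. Let G_• be a chain complex in C with G_i = 0 for all i < 0. Then there exist a chain complex L_• with L_i = 0 for all i < 0 and every L_i an object of V, and a quasi-isomorphism of chain complexes g_• : L_• → G_•. -/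
open CategoryTheory CategoryTheory.Limits

namespace Stmt2Aux

variable {C : Type*} [Category C] [Abelian C] (V : C → Prop)
  (hV_epi : ∀ X : C, ∃ (P : C) (p : P ⟶ X), V P ∧ Epi p)
  (G' : ChainComplex C ℕ)

/-- Data at stage `n` of the construction: an object `L` of `V` with a map to `G'.X n`,
together with a "cycles" subobject `K` whose image in homology is everything. -/
structure Gad (n : ℕ) where
  L : C
  hL : V L
  g : L ⟶ G'.X n
  K : C
  ι : K ⟶ L
  hcyc : (ι ≫ g) ≫ G'.d n ((ComplexShape.down ℕ).next n) = 0
  hepiH : Epi (G'.liftCycles (ι ≫ g) _ rfl hcyc ≫ G'.homologyπ n)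

/-- The data linking two consecutive stages. -/
structure Link {n : ℕ} (s : Gad V G' n) (t : Gad V G' (n + 1)) where
  φ : t.L ⟶ s.K
  hcomm : φ ≫ (s.ι ≫ s.g) = t.g ≫ G'.d (n + 1) n
  hι0 : t.ι ≫ (φ ≫ s.ι) = 0
  hker : ∀ ⦃T : C⦄ (z : T ⟶ t.L), z ≫ (φ ≫ s.ι) = 0 → ∃ w : T ⟶ t.K, w ≫ t.ι = z
  hpull : Epi (pullback.lift φ t.g hcomm)

lemma epi_lift_zero {A : C} (k : A ⟶ G'.X 0) (hk1 : Epi k)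
    (hk : k ≫ G'.d 0 ((ComplexShape.down ℕ).next 0) = 0) :
    Epi (G'.liftCycles k _ rfl hk ≫ G'.homologyπ 0) := by
  have hd : G'.d 0 ((ComplexShape.down ℕ).next 0) = 0 :=
    G'.shape 0 _ (by simp [ComplexShape.down_Rel])
  have := G'.isIso_iCycles 0 _ rfl hd
  have h2 : G'.liftCycles k _ rfl hk = k ≫ inv (G'.iCycles 0) := by
    rw [IsIso.eq_comp_inv]; simp
  have : Epi (G'.liftCycles k _ rfl hk) := by
    rw [h2]; exact @epi_comp _ _ _ _ _ _ hk1 _ inferInstance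
  exact epi_comp _ _

noncomputable def step0 : Gad V G' 0 where
  L := (hV_epi (G'.X 0)).choose
  hL := (hV_epi (G'.X 0)).choose_spec.choose_spec.1
  g := (hV_epi (G'.X 0)).choose_spec.choose
  K := (hV_epi (G'.X 0)).choose
  ι := 𝟙 _
  hcyc := by
    rw [G'.shape 0 _ (by simp [ComplexShape.down_Rel]), Limits.comp_zero]
  hepiH := by
    apply epi_lift_zero
    rw [Category.id_comp]
    exact (hV_epi (G'.X 0)).choose_spec.choose_spec.2

noncomputable def stepS {n : ℕ} (s : Gad V G' n) :
    Σ' (t : Gad V G' (n + 1)), Link V G' s t :=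
  let M := pullback (s.ι ≫ s.g) (G'.d (n + 1) n)
  let P : C := (hV_epi M).choose
  let p : P ⟶ M := (hV_epi M).choose_spec.choose
  have hP : V P := (hV_epi M).choose_spec.choose_spec.1
  have hp : Epi p := (hV_epi M).choose_spec.choose_spec.2
  let φ : P ⟶ s.K := p ≫ pullback.fst _ _
  let g1 : P ⟶ G'.X (n + 1) := p ≫ pullback.snd _ _
  have hcomm : φ ≫ (s.ι ≫ s.g) = g1 ≫ G'.d (n + 1) n := by
    simp only [φ, g1, Category.assoc]
    rw [pullback.condition]
  let e : P ⟶ s.L := φ ≫ s.ι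
  have hnext : (ComplexShape.down ℕ).next (n + 1) = n := ChainComplex.next_nat_succ n
  have hcyc : (kernel.ι e ≫ g1) ≫ G'.d (n + 1) ((ComplexShape.down ℕ).next (n + 1)) = 0 := by
    rw [hnext, Category.assoc, ← hcomm]
    have h0 : kernel.ι e ≫ φ ≫ s.ι = 0 := kernel.condition e
    rw [show kernel.ι e ≫ φ ≫ s.ι ≫ s.g = (kernel.ι e ≫ φ ≫ s.ι) ≫ s.g by
      simp only [Category.assoc], h0, Limits.zero_comp]
  have hepiH : Epi (G'.liftCycles (kernel.ι e ≫ g1) _ rfl hcyc ≫ G'.homologyπ (n + 1)) := by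
    rw [epi_iff_surjective_up_to_refinements]
    intro A γ
    obtain ⟨A₁, π₁, hπ₁, z, hz, fac₁⟩ :=
      G'.eq_liftCycles_homologyπ_up_to_refinements γ _ rfl
    rw [hnext] at hz
    have hm : (0 : A₁ ⟶ s.K) ≫ (s.ι ≫ s.g) = z ≫ G'.d (n + 1) n := by
      rw [hz, Limits.zero_comp]
    obtain ⟨A₂, π₂, hπ₂, l, hl⟩ :=
      surjective_up_to_refinements_of_epi p (pullback.lift 0 z hm)
    have hl1 : l ≫ e = 0 := by
      have h := hl =≫ (pullback.fst (s.ι ≫ s.g) (G'.d (n + 1) n))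
      simp only [Category.assoc, pullback.lift_fst, Limits.comp_zero] at h
      rw [show l ≫ e = (l ≫ p ≫ pullback.fst (s.ι ≫ s.g) (G'.d (n + 1) n)) ≫ s.ι by
        simp only [e, φ, Category.assoc], ← h, Limits.zero_comp]
    have hl2 : l ≫ g1 = π₂ ≫ z := by
      have h := hl =≫ (pullback.snd (s.ι ≫ s.g) (G'.d (n + 1) n))
      simp only [Category.assoc, pullback.lift_snd] at h
      rw [show l ≫ g1 = l ≫ p ≫ pullback.snd (s.ι ≫ s.g) (G'.d (n + 1) n) by
        simp only [g1, Category.assoc], ← h]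
    refine ⟨A₂, π₂ ≫ π₁, epi_comp _ _, kernel.lift e l hl1, ?_⟩
    rw [Category.assoc, fac₁, ← Category.assoc, ← Category.assoc]
    congr 1
    rw [← cancel_mono (G'.iCycles (n + 1))]
    simp only [Category.assoc, HomologicalComplex.liftCycles_i]
    rw [← Category.assoc, kernel.lift_ι, hl2]
  ⟨{ L := P
     hL := hP
     g := g1
     K := kernel e
     ι := kernel.ι e
     hcyc := hcyc
     hepiH := hepiH },
   { φ := φ
     hcomm := hcomm
     hι0 := kernel.condition e
     hker := fun T z hzz => ⟨kernel.lift e z hzz, kernel.lift_ι e z hzz⟩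
     hpull := by
       have : pullback.lift φ g1 hcomm = p := by
         apply pullback.hom_ext
         · exact pullback.lift_fst _ _ _
         · exact pullback.lift_snd _ _ _
       rw [this]; exact hp }⟩

noncomputable def tower : ∀ n : ℕ, Gad V G' n
  | 0 => step0 V hV_epi G'
  | (n + 1) => (stepS V hV_epi G' (tower n)).1

noncomputable def link (n : ℕ) :
    Link V G' (tower V hV_epi G' n) (tower V hV_epi G' (n + 1)) :=
  (stepS V hV_epi G' (tower V hV_epi G' n)).2

/-- The resolution complex. -/
noncomputable def LL : ChainComplex C ℕ :=
  ChainComplex.of (fun n => (tower V hV_epi G' n).L)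
    (fun n => (link V hV_epi G' n).φ ≫ (tower V hV_epi G' n).ι)
    (fun n => by
      simp only [Category.assoc]
      rw [(link V hV_epi G' n).hι0]
      simp)

lemma LL_d (n : ℕ) :
    (LL V hV_epi G').d (n + 1) n = (link V hV_epi G' n).φ ≫ (tower V hV_epi G' n).ι :=
  ChainComplex.of_d (fun n => (tower V hV_epi G' n).L)
    (fun n => (link V hV_epi G' n).φ ≫ (tower V hV_epi G' n).ι) n

/-- The quasi-isomorphism. -/
noncomputable def gg : LL V hV_epi G' ⟶ G' where
  f n := (tower V hV_epi G' n).g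
  comm' := by
    rintro i j hij
    obtain rfl : j + 1 = i := hij
    rw [LL_d]
    exact ((Category.assoc _ _ _).trans (link V hV_epi G' j).hcomm).symm

@[simp] lemma gg_f (n : ℕ) : (gg V hV_epi G').f n = (tower V hV_epi G' n).g := rfl

lemma ι_zero_eq : (tower V hV_epi G' 0).ι = 𝟙 _ := rfl

lemma ι_d (n : ℕ) :
    (tower V hV_epi G' n).ι ≫ (LL V hV_epi G').d n ((ComplexShape.down ℕ).next n) = 0 := by
  cases n with
  | zero =>
      rw [(LL V hV_epi G').shape 0 _ (by simp [ComplexShape.down_Rel])]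
      exact Limits.comp_zero
  | succ m =>
      rw [ChainComplex.next_nat_succ, LL_d]
      exact (link V hV_epi G' m).hι0

lemma exists_liftK (n : ℕ) {T : C} (z : T ⟶ (LL V hV_epi G').X n)
    (hz : z ≫ (LL V hV_epi G').d n ((ComplexShape.down ℕ).next n) = 0) :
    ∃ w : T ⟶ (tower V hV_epi G' n).K, w ≫ (tower V hV_epi G' n).ι = z := by
  cases n with
  | zero => exact ⟨z, by rw [ι_zero_eq]; exact Category.comp_id _⟩
  | succ m =>
      rw [ChainComplex.next_nat_succ, LL_d] at hz
      exact (link V hV_epi G' m).hker z hz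

end Stmt2Aux

open Stmt2Aux in
/-- Let `C` be an abelian category and `V` a full subcategory of `C`
(encoded as an isomorphism-closed predicate on objects) such that every object of `C`
admits an epimorphism from an object of `V`.  Let `G'` be a chain complex in `C`
concentrated in nonnegative degrees (i.e. indexed by `ℕ`).  Then there exist a chain
complex `L` concentrated in nonnegative degrees with every term in `V` and a
quasi-isomorphism `g : L ⟶ G'`. -/
theorem stmt_2 {C : Type*} [Category C] [Abelian C]
    (V : C → Prop)
    (hV_iso : ∀ {X Y : C}, (X ≅ Y) → V X → V Y)
    (hV_epi : ∀ X : C, ∃ (P : C) (p : P ⟶ X), V P ∧ Epi p)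
    (G' : ChainComplex C ℕ) :
    ∃ (L : ChainComplex C ℕ) (g : L ⟶ G'),
      (∀ n : ℕ, V (L.X n)) ∧ QuasiIso g := by
  refine ⟨LL V hV_epi G', gg V hV_epi G', fun n => (tower V hV_epi G' n).hL, ?_⟩
  rw [quasiIso_iff]
  intro n
  rw [quasiIsoAt_iff_isIso_homologyMap]
  have hm : Mono (HomologicalComplex.homologyMap (gg V hV_epi G') n) := by
    rw [Preadditive.mono_iff_cancel_zero]
    intro T h hh
    obtain ⟨A₁, π₁, hπ₁, z, hz, fac₁⟩ :=
      (LL V hV_epi G').eq_liftCycles_homologyπ_up_to_refinements h _ rfl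
    obtain ⟨w, hw⟩ := exists_liftK V hV_epi G' n z hz
    have hzg : (z ≫ (gg V hV_epi G').f n) ≫ G'.d n ((ComplexShape.down ℕ).next n) = 0 := by
      rw [Category.assoc, (gg V hV_epi G').comm, ← Category.assoc, hz, Limits.zero_comp]
    have h2 : G'.liftCycles (z ≫ (gg V hV_epi G').f n) _ rfl hzg ≫ G'.homologyπ n = 0 := by
      have e1 : ((LL V hV_epi G').liftCycles z _ rfl hz ≫ (LL V hV_epi G').homologyπ n) ≫
          HomologicalComplex.homologyMap (gg V hV_epi G') n = 0 := by
        rw [← fac₁, Category.assoc, hh, Limits.comp_zero]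
      rw [Category.assoc, HomologicalComplex.homologyπ_naturality, ← Category.assoc,
        HomologicalComplex.liftCycles_comp_cyclesMap] at e1
      convert e1 using 2
    -- exact: boundaries
    have hcoker := G'.homologyIsCokernel (n + 1) n (ChainComplex.prev ℕ n)
    have hS : (ShortComplex.mk (G'.toCycles (n + 1) n) (G'.homologyπ n)
        (G'.toCycles_comp_homologyπ _ _)).Exact :=
      ShortComplex.exact_of_g_is_cokernel _ hcoker
    obtain ⟨A₂, π₂, hπ₂, y, hy⟩ := hS.exact_up_to_refinements
      (G'.liftCycles (z ≫ (gg V hV_epi G').f n) _ rfl hzg) h2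
    have hy' : π₂ ≫ (z ≫ (gg V hV_epi G').f n) = y ≫ G'.d (n + 1) n := by
      have := hy =≫ (G'.iCycles n)
      simpa using this
    have hcond : (π₂ ≫ w) ≫ ((tower V hV_epi G' n).ι ≫ (tower V hV_epi G' n).g) =
        y ≫ G'.d (n + 1) n := by
      rw [← hy']
      simp only [Category.assoc]
      rw [← Category.assoc w, hw]
      rfl
    have hpull := (link V hV_epi G' n).hpull
    obtain ⟨A₃, π₃, hπ₃, l, hl⟩ := surjective_up_to_refinements_of_epi
      (pullback.lift (link V hV_epi G' n).φ (tower V hV_epi G' (n + 1)).g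
        (link V hV_epi G' n).hcomm)
      (pullback.lift (π₂ ≫ w) y hcond)
    have h6 : π₃ ≫ π₂ ≫ z = l ≫ (LL V hV_epi G').d (n + 1) n := by
      have hfst := hl =≫ (pullback.fst ((tower V hV_epi G' n).ι ≫ (tower V hV_epi G' n).g)
        (G'.d (n + 1) n))
      simp only [Category.assoc, pullback.lift_fst] at hfst
      rw [LL_d, ← hw]
      have h' := hfst =≫ (tower V hV_epi G' n).ι
      simp only [Category.assoc] at h'
      exact h'
    have h7 : (π₃ ≫ π₂) ≫ (LL V hV_epi G').liftCycles z _ rfl hz ≫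
        (LL V hV_epi G').homologyπ n = 0 := by
      rw [← Category.assoc, HomologicalComplex.comp_liftCycles]
      exact (LL V hV_epi G').liftCycles_homologyπ_eq_zero_of_boundary ((π₃ ≫ π₂) ≫ z) _ rfl
        (i' := n + 1) l (by rw [Category.assoc]; exact h6)
    have h8 : (π₃ ≫ π₂ ≫ π₁) ≫ h = 0 := by
      calc (π₃ ≫ π₂ ≫ π₁) ≫ h = (π₃ ≫ π₂) ≫ (π₁ ≫ h) := by simp only [Category.assoc]
        _ = (π₃ ≫ π₂) ≫ (LL V hV_epi G').liftCycles z _ rfl hz ≫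
            (LL V hV_epi G').homologyπ n := by rw [fac₁]
        _ = 0 := h7
    exact zero_of_epi_comp _ h8
  have he : Epi (HomologicalComplex.homologyMap (gg V hV_epi G') n) := by
    have inv := (tower V hV_epi G' n).hepiH
    have fac : ((LL V hV_epi G').liftCycles (tower V hV_epi G' n).ι _ rfl
          (ι_d V hV_epi G' n) ≫ (LL V hV_epi G').homologyπ n) ≫
        HomologicalComplex.homologyMap (gg V hV_epi G') n =
        G'.liftCycles ((tower V hV_epi G' n).ι ≫ (tower V hV_epi G' n).g) _ rfl
          (tower V hV_epi G' n).hcyc ≫ G'.homologyπ n := by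
      rw [Category.assoc, HomologicalComplex.homologyπ_naturality, ← Category.assoc]
      erw [HomologicalComplex.liftCycles_comp_cyclesMap]
      rfl
    have : Epi (((LL V hV_epi G').liftCycles (tower V hV_epi G' n).ι _ rfl
          (ι_d V hV_epi G' n) ≫ (LL V hV_epi G').homologyπ n) ≫
        HomologicalComplex.homologyMap (gg V hV_epi G') n) := by
      rw [fac]; exact inv
    exact epi_of_epi ((LL V hV_epi G').liftCycles (tower V hV_epi G' n).ι _ rfl
      (ι_d V hV_epi G' n) ≫ (LL V hV_epi G').homologyπ n)
      (HomologicalComplex.homologyMap (gg V hV_epi G') n)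
  exact isIso_of_mono_of_epi _
end

section
/- Let C be an abelian category, g : F → G a morphism in C, and let F_•, G_• be chain complexes in C concentrated in nonnegative degrees, together with morphisms ε_F : F_0 → F and ε_G : G_0 → G making the augmented complexes ⋯ → F_1 → F_0 → F → 0 and ⋯ → G_1 → G_0 → G → 0 exact. Let Γ_• be the degreewise pullback of the diagram F_• → G ← G_•, where G is regarded as a chain complex concentrated in degree 0, the map F_• → G is given in degree 0 by g ∘ ε_F, and the map G_• → G is given in degree 0 by ε_G; thus Γ_0 is the pullback of g ∘ ε_F and ε_G, and Γ_i = F_i ⊕ G_i with the induced differentials for i ≥ 1. Then the canonical projection t : Γ_• → F_• is a quasi-isomorphism, the canonical projection u : Γ_• → G_• is a chain map, and ε_G ∘ u_0 = g ∘ ε_F ∘ t_0. -/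
open CategoryTheory CategoryTheory.Limits

/-- The complex `⋯ ⟶ G'_2 ⟶ G'_1 ⟶ ker εG ⟶ 0`. -/
noncomputable abbrev stmtK {C : Type*} [Category C] [Abelian C] {G : C}
    (G' : ChainComplex C ℕ) (εG : G'.X 0 ⟶ G) (hG0 : G'.d 1 0 ≫ εG = 0) :
    ChainComplex C ℕ :=
  ChainComplex.of
    (fun n => match n with
      | 0 => kernel εG
      | (n + 1) => G'.X (n + 1))
    (fun n => match n with
      | 0 => kernel.lift εG (G'.d 1 0) hG0
      | (n + 1) => G'.d (n + 2) (n + 1))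
    (fun n => match n with
      | 0 => by
          rw [← cancel_mono (kernel.ι εG), Category.assoc, kernel.lift_ι, zero_comp]
          exact G'.d_comp_d 2 1 0
      | (n + 1) => G'.d_comp_d _ _ _)

@[simp] lemma stmtK_d0 {C : Type*} [Category C] [Abelian C] {G : C}
    (G' : ChainComplex C ℕ) (εG : G'.X 0 ⟶ G) (hG0 : G'.d 1 0 ≫ εG = 0) :
    (stmtK G' εG hG0).d 1 0 = kernel.lift εG (G'.d 1 0) hG0 :=
  by unfold stmtK; dsimp only; exact ChainComplex.of_d (V := C) (α := ℕ) _ _ 0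

@[simp] lemma stmtK_d_succ {C : Type*} [Category C] [Abelian C] {G : C}
    (G' : ChainComplex C ℕ) (εG : G'.X 0 ⟶ G) (hG0 : G'.d 1 0 ≫ εG = 0) (n : ℕ) :
    (stmtK G' εG hG0).d (n + 2) (n + 1) = G'.d (n + 2) (n + 1) :=
  by unfold stmtK; dsimp only; exact ChainComplex.of_d (V := C) (α := ℕ) _ _ (n + 1)

/-- The inclusion of `stmtK` into the pullback complex `Γ`. -/
noncomputable def stmtPhi {C : Type*} [Category C] [Abelian C]
    {F G : C} (g : F ⟶ G)
    {F' G' : ChainComplex C ℕ}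
    (εF : F'.X 0 ⟶ F) (εG : G'.X 0 ⟶ G) (hG0 : G'.d 1 0 ≫ εG = 0)
    {Γ : ChainComplex C ℕ} (t : Γ ⟶ F') (u : Γ ⟶ G')
    (hpb0 : IsPullback (t.f 0) (u.f 0) (εF ≫ g) εG)
    (hpb : ∀ n : ℕ, IsPullback (t.f (n + 1)) (u.f (n + 1))
      (0 : F'.X (n + 1) ⟶ G) (0 : G'.X (n + 1) ⟶ G)) :
    stmtK G' εG hG0 ⟶ Γ where
  f n := match n with
    | 0 => hpb0.lift 0 (kernel.ι εG) (by simp)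
    | (n + 1) => (hpb n).lift 0 (𝟙 _) (by simp)
  comm' i j hij := by
    obtain rfl : j + 1 = i := hij
    match j with
    | 0 =>
      apply hpb0.hom_ext
      · simp only [Category.assoc, ← HomologicalComplex.Hom.comm,
          IsPullback.lift_fst_assoc, IsPullback.lift_fst, zero_comp, comp_zero]
      · simp only [Category.assoc, ← HomologicalComplex.Hom.comm,
          IsPullback.lift_snd_assoc, IsPullback.lift_snd, Category.id_comp]
        exact (by rw [stmtK_d0, kernel.lift_ι] :
          G'.d 1 0 = (stmtK G' εG hG0).d 1 0 ≫ kernel.ι εG)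
    | (j + 1) =>
      apply (hpb j).hom_ext
      · simp only [Category.assoc, ← HomologicalComplex.Hom.comm,
          IsPullback.lift_fst_assoc, IsPullback.lift_fst, zero_comp, comp_zero]
      · simp only [Category.assoc, ← HomologicalComplex.Hom.comm,
          IsPullback.lift_snd_assoc, IsPullback.lift_snd, Category.id_comp,
          stmtK_d_succ, Category.comp_id]
        exact (stmtK_d_succ G' εG hG0 j).symm

lemma stmtExactTransfer {C : Type*} [Category C] [Abelian C] {X₁ X₂ X₃ Y₃ : C}
    (f₁ : X₁ ⟶ X₂) (g₁ : X₂ ⟶ X₃) (w₁ : f₁ ≫ g₁ = 0)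
    (f₂ : X₁ ⟶ X₂) (g₂ : X₂ ⟶ Y₃) (w₂ : f₂ ≫ g₂ = 0)
    (ι : X₃ ⟶ Y₃) [Mono ι] (hf : f₁ = f₂) (hg : g₁ ≫ ι = g₂)
    (he : (ShortComplex.mk f₂ g₂ w₂).Exact) : (ShortComplex.mk f₁ g₁ w₁).Exact := by
  subst hf
  subst hg
  let ψ : ShortComplex.mk f₁ g₁ w₁ ⟶ ShortComplex.mk f₁ (g₁ ≫ ι) w₂ :=
    { τ₁ := 𝟙 _
      τ₂ := 𝟙 _
      τ₃ := ι
      comm₁₂ := by simp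
      comm₂₃ := by simp }
  haveI : Epi ψ.τ₁ := inferInstanceAs (Epi (𝟙 X₁))
  haveI : IsIso ψ.τ₂ := inferInstanceAs (IsIso (𝟙 X₂))
  haveI : Mono ψ.τ₃ := inferInstanceAs (Mono ι)
  exact (ShortComplex.exact_iff_of_epi_of_isIso_of_mono ψ).2 he

/-- Let `C` be an abelian category, `g : F ⟶ G` a morphism in `C`, and
`F'`, `G'` chain complexes concentrated in nonnegative degrees with augmentations
`εF : F'.X 0 ⟶ F`, `εG : G'.X 0 ⟶ G` making the augmented complexes exact.  Let
`Γ` (with projections `t : Γ ⟶ F'` and `u : Γ ⟶ G'`) be the degreewise pullback of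
`F' → G ← G'`, where `G` is regarded as a complex concentrated in degree `0`: in
degree `0` the square over `εF ≫ g` and `εG` is a pullback, and in each degree
`n + 1` the square over the zero maps to `G` is a pullback (so that
`Γ.X (n+1) ≅ F'.X (n+1) ⊞ G'.X (n+1)`).  Then `t` is a quasi-isomorphism, `u` is a
chain map, and `u.f 0 ≫ εG = t.f 0 ≫ εF ≫ g`. -/
theorem stmt_4 {C : Type*} [Category C] [Abelian C]
    {F G : C} (g : F ⟶ G)
    (F' G' : ChainComplex C ℕ)
    (εF : F'.X 0 ⟶ F) (hF0 : F'.d 1 0 ≫ εF = 0) (hεF_epi : Epi εF)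
    (hF_exact0 : (ShortComplex.mk (F'.d 1 0) εF hF0).Exact)
    (hF_exact : ∀ n : ℕ, F'.ExactAt (n + 1))
    (εG : G'.X 0 ⟶ G) (hG0 : G'.d 1 0 ≫ εG = 0) (hεG_epi : Epi εG)
    (hG_exact0 : (ShortComplex.mk (G'.d 1 0) εG hG0).Exact)
    (hG_exact : ∀ n : ℕ, G'.ExactAt (n + 1))
    (Γ : ChainComplex C ℕ) (t : Γ ⟶ F') (u : Γ ⟶ G')
    (hpb0 : IsPullback (t.f 0) (u.f 0) (εF ≫ g) εG)
    (hpb : ∀ n : ℕ, IsPullback (t.f (n + 1)) (u.f (n + 1))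
      (0 : F'.X (n + 1) ⟶ G) (0 : G'.X (n + 1) ⟶ G)) :
    QuasiIso t ∧ u.f 0 ≫ εG = t.f 0 ≫ εF ≫ g := by
  refine ⟨?_, hpb0.w.symm⟩
  haveI : Epi εG := hεG_epi
  set K : ChainComplex C ℕ := stmtK G' εG hG0 with hKdef
  set φ : K ⟶ Γ := stmtPhi g εF εG hG0 t u hpb0 hpb with hφdef
  have hf0 : φ.f 0 = hpb0.lift 0 (kernel.ι εG) (by simp) := rfl
  have hfs : ∀ n : ℕ, φ.f (n + 1) = (hpb n).lift 0 (𝟙 _) (by simp) := fun n => rfl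
  -- the short exact sequence `0 ⟶ K ⟶ Γ ⟶ F' ⟶ 0`
  have hφt : φ ≫ t = 0 := by
    ext n
    cases n with
    | zero => simp [hf0]
    | succ n => simp [hfs n]
  set S : ShortComplex (HomologicalComplex C (ComplexShape.down ℕ)) :=
    ShortComplex.mk φ t hφt with hSdef
  haveI : Mono (φ.f 0) := by
    have h : φ.f 0 ≫ u.f 0 = kernel.ι εG := by rw [hf0, IsPullback.lift_snd]
    haveI : Mono (φ.f 0 ≫ u.f 0) := by rw [h]; infer_instance
    exact mono_of_mono _ (u.f 0)
  haveI : Epi (t.f 0) := by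
    rw [← hpb0.isoPullback_hom_fst]
    exact epi_comp _ _
  have hS : S.ShortExact := by
    apply HomologicalComplex.shortExact_of_degreewise_shortExact
    intro i
    cases i with
    | zero =>
      have h0 : φ.f 0 ≫ t.f 0 = 0 := by rw [hf0, hpb0.lift_fst]
      have hse : (ShortComplex.mk (φ.f 0) (t.f 0) h0).ShortExact := by
        haveI hm : Mono (ShortComplex.mk (φ.f 0) (t.f 0) h0).f :=
          inferInstanceAs (Mono (φ.f 0))
        refine { exact := ?_, mono_f := hm,
                 epi_g := inferInstanceAs (Epi (t.f 0)) }
        apply ShortComplex.exact_of_f_is_kernel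
        refine KernelFork.IsLimit.ofι' _ _ (fun {A} a ha => ⟨kernel.lift εG (a ≫ u.f 0) ?_, ?_⟩)
        · rw [Category.assoc, ← hpb0.w, ← Category.assoc, ha, zero_comp]
        · apply hpb0.hom_ext
          · simp only [Category.assoc, hf0, IsPullback.lift_fst, comp_zero]
            exact ha.symm
          · simp only [Category.assoc, hf0, IsPullback.lift_snd, kernel.lift_ι]
      exact hse
    | succ n =>
      have hcomp : φ.f (n + 1) ≫ t.f (n + 1) = 0 := by rw [hfs n, IsPullback.lift_fst]
      have spl : (ShortComplex.mk (φ.f (n + 1)) (t.f (n + 1)) hcomp).Splitting :=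
        { r := u.f (n + 1)
          s := (hpb n).lift (𝟙 _) 0 (by simp)
          f_r := by
            dsimp
            rw [hfs n, IsPullback.lift_snd]
          s_g := (hpb n).lift_fst _ _ _
          id := by
            dsimp
            apply (hpb n).hom_ext
            · simp only [Preadditive.add_comp, Category.assoc, hfs n, IsPullback.lift_fst,
                IsPullback.lift_snd, comp_zero, zero_add, Category.comp_id, Category.id_comp]
            · simp only [Preadditive.add_comp, Category.assoc, hfs n, IsPullback.lift_fst,
                IsPullback.lift_snd, comp_zero, add_zero, Category.id_comp]
              exact Category.comp_id _ }
      exact spl.shortExact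
  -- `K` is acyclic
  have hKexact : ∀ n : ℕ, K.ExactAt n := by
    intro n
    match n with
    | 0 =>
      rw [K.exactAt_iff' 1 0 0 (by simp) (by simp [ChainComplex.next_nat_zero])]
      rw [ShortComplex.exact_iff_epi _ (K.shape 0 0 (by simp))]
      show Epi (K.d 1 0)
      have hd : K.d 1 0 = kernel.lift εG (G'.d 1 0) hG0 := stmtK_d0 G' εG hG0
      rw [hd]
      exact (ShortComplex.exact_iff_epi_kernel_lift _).1 hG_exact0
    | 1 =>
      rw [K.exactAt_iff' 2 1 0 (by simp) (by simp [ChainComplex.next_nat_succ])]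
      have hG1 : (ShortComplex.mk (G'.d 2 1) (G'.d 1 0) (G'.d_comp_d 2 1 0)).Exact := by
        have := hG_exact 0
        rw [G'.exactAt_iff' 2 1 0 (by simp) (by simp [ChainComplex.next_nat_succ])] at this
        exact this
      exact stmtExactTransfer (X₃ := kernel εG) _ _ _ _ _ (G'.d_comp_d 2 1 0) (kernel.ι εG)
        (stmtK_d_succ G' εG hG0 0)
        (by rw [show K.d 1 0 = kernel.lift εG (G'.d 1 0) hG0 from stmtK_d0 G' εG hG0,
          kernel.lift_ι]) hG1
    | (n + 2) =>
      rw [K.exactAt_iff' (n + 3) (n + 2) (n + 1) (by simp) (by simp [ChainComplex.next_nat_succ])]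
      have hGn : (ShortComplex.mk (G'.d (n + 3) (n + 2)) (G'.d (n + 2) (n + 1))
          (G'.d_comp_d _ _ _)).Exact := by
        have := hG_exact (n + 1)
        rw [G'.exactAt_iff' (n + 3) (n + 2) (n + 1) (by simp)
          (by simp [ChainComplex.next_nat_succ])] at this
        exact this
      exact stmtExactTransfer (X₃ := G'.X (n + 1)) _ _ _ _ _ (G'.d_comp_d _ _ _)
        (𝟙 (G'.X (n + 1))) (stmtK_d_succ G' εG hG0 (n + 1))
        (by rw [show K.d (n + 2) (n + 1) = G'.d (n + 2) (n + 1) from stmtK_d_succ G' εG hG0 n]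
            exact Category.comp_id _) hGn
  have hz : ∀ m : ℕ, IsZero (K.homology m) := fun m =>
    (K.exactAt_iff_isZero_homology m).1 (hKexact m)
  rw [quasiIso_iff]
  intro n
  rw [quasiIsoAt_iff_isIso_homologyMap]
  haveI : Mono (HomologicalComplex.homologyMap t n) := by
    have h2 := hS.homology_exact₂ n
    exact h2.mono_g ((hz n).eq_of_src _ _)
  haveI : Epi (HomologicalComplex.homologyMap t n) := by
    cases n with
    | zero =>
      exact HomologicalComplex.epi_homologyMap_of_epi_of_not_rel t 0 (by simp)
    | succ m =>
      have h3 := hS.homology_exact₃ (m + 1) m (by simp)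
      exact h3.epi_f ((hz m).eq_of_tgt _ _)
  exact isIso_of_mono_of_epi _
end

section
/- Let C be an abelian category and V a full subcategory of C such that every object of C admits an epimorphism from an object of V. Let g : F → G be a morphism in C, and let F_•, G_• be chain complexes in C concentrated in nonnegative degrees, together with morphisms ε_F : F_0 → F and ε_G : G_0 → G making the augmented complexes ⋯ → F_1 → F_0 → F → 0 and ⋯ → G_1 → G_0 → G → 0 exact. Then there exist a chain complex L_• concentrated in nonnegative degrees with every term an object of V, a quasi-isomorphism τ : L_• → F_•, and a chain map γ : L_• → G_• such that ε_G ∘ γ_0 = g ∘ ε_F ∘ τ_0. -/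
open CategoryTheory CategoryTheory.Limits


namespace Stmt6Aux

variable {C : Type*} [Category C] [Abelian C]

/-- A map to `single₀` from an exact augmented complex is a quasi-isomorphism. -/
lemma quasiIso_toSingle₀ {F : C} (K : ChainComplex C ℕ)
    (ε : K.X 0 ⟶ F) (hd : K.d 1 0 ≫ ε = 0) (hepi : Epi ε)
    (hex0 : (ShortComplex.mk (K.d 1 0) ε hd).Exact)
    (hex : ∀ n, K.ExactAt (n + 1)) :
    QuasiIso ((ChainComplex.toSingle₀Equiv K F).symm ⟨ε, hd⟩) := by
  constructor
  rintro (_|n)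
  · rw [ChainComplex.quasiIsoAt₀_iff, ShortComplex.quasiIso_iff_of_zeros']
    rotate_left
    · exact K.shape 0 0 (by simp)
    · rfl
    · rfl
    · refine (ShortComplex.exact_and_epi_g_iff_of_iso ?_).2 ⟨hex0, hepi⟩
      exact ShortComplex.isoMk (Iso.refl _) (Iso.refl _) (Iso.refl _)
        (by simp; exact (Category.id_comp _).trans (Category.comp_id _).symm) (by simp; exact (Category.id_comp _).trans (Category.comp_id _).symm)
  · rw [quasiIsoAt_iff_exactAt' _ (n+1) (ChainComplex.exactAt_succ_single_obj _ _)]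
    exact hex n

/-- One step of the simultaneous construction. -/
lemma step (V : C → Prop) (hV_epi : ∀ X : C, ∃ (P : C) (p : P ⟶ X), V P ∧ Epi p)
    {A0 A1 A2 B0 B1 B2 : C}
    {dA2 : A2 ⟶ A1} {dA1 : A1 ⟶ A0} {wA : dA2 ≫ dA1 = 0}
    (hA : (ShortComplex.mk dA2 dA1 wA).Exact)
    {dB2 : B2 ⟶ B1} {dB1 : B1 ⟶ B0} {wB : dB2 ≫ dB1 = 0}
    (hB : (ShortComplex.mk dB2 dB1 wB).Exact)
    {K K' : C} (δ : K' ⟶ K) (t : K ⟶ A0) (t' : K' ⟶ A1) (c : K ⟶ B0) (c' : K' ⟶ B1)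
    (sqA : t' ≫ dA1 = δ ≫ t) (sqB : c' ≫ dB1 = δ ≫ c) :
    ∃ (K'' : C) (δ' : K'' ⟶ K') (t'' : K'' ⟶ A2) (c'' : K'' ⟶ B2) (hw : δ' ≫ δ = 0),
      V K'' ∧ (t'' ≫ dA2 = δ' ≫ t') ∧ (c'' ≫ dB2 = δ' ≫ c') ∧
      (ShortComplex.mk δ' δ hw).Exact := by
  haveI hA' : Epi (kernel.lift dA1 dA2 wA) :=
    (ShortComplex.exact_iff_epi_kernel_lift _).1 hA
  haveI hB' : Epi (kernel.lift dB1 dB2 wB) :=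
    (ShortComplex.exact_iff_epi_kernel_lift _).1 hB
  have ha : (kernel.ι δ ≫ t') ≫ dA1 = 0 := by
    rw [Category.assoc, sqA, kernel.condition_assoc, zero_comp]
  have hb : (kernel.ι δ ≫ c') ≫ dB1 = 0 := by
    rw [Category.assoc, sqB, kernel.condition_assoc, zero_comp]
  -- first pullback
  obtain ⟨Q, p, hVQ, hp⟩ := hV_epi (pullback
    (pullback.fst (kernel.lift dA1 (kernel.ι δ ≫ t') ha) (kernel.lift dA1 dA2 wA) ≫
      kernel.lift dB1 (kernel.ι δ ≫ c') hb)
    (kernel.lift dB1 dB2 wB))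
  refine ⟨Q,
    p ≫ pullback.fst _ _ ≫ pullback.fst _ _ ≫ kernel.ι δ,
    p ≫ pullback.fst _ _ ≫ pullback.snd _ _,
    p ≫ pullback.snd _ _, by simp, hVQ, ?_, ?_, ?_⟩
  · have e1 : pullback.snd (kernel.lift dA1 (kernel.ι δ ≫ t') ha) (kernel.lift dA1 dA2 wA) ≫ dA2
        = pullback.fst _ _ ≫ kernel.ι δ ≫ t' := by
      have e0 := congrArg (· ≫ kernel.ι dA1)
        (pullback.condition (f := kernel.lift dA1 (kernel.ι δ ≫ t') ha)
          (g := kernel.lift dA1 dA2 wA))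
      simp only [Category.assoc, kernel.lift_ι] at e0
      exact e0.symm
    simp only [Category.assoc]
    rw [e1]
  · have e2 : pullback.snd
        (pullback.fst (kernel.lift dA1 (kernel.ι δ ≫ t') ha) (kernel.lift dA1 dA2 wA) ≫
          kernel.lift dB1 (kernel.ι δ ≫ c') hb)
        (kernel.lift dB1 dB2 wB) ≫ dB2
        = pullback.fst _ _ ≫ pullback.fst _ _ ≫ kernel.ι δ ≫ c' := by
      have e0 := congrArg (· ≫ kernel.ι dB1)
        (pullback.condition
          (f := pullback.fst (kernel.lift dA1 (kernel.ι δ ≫ t') ha) (kernel.lift dA1 dA2 wA) ≫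
            kernel.lift dB1 (kernel.ι δ ≫ c') hb)
          (g := kernel.lift dB1 dB2 wB))
      simp only [Category.assoc, kernel.lift_ι] at e0
      exact e0.symm
    simp only [Category.assoc]
    rw [e2]
  · rw [ShortComplex.exact_iff_epi_kernel_lift]
    have hq : kernel.lift δ
        (p ≫ pullback.fst _ _ ≫ pullback.fst _ _ ≫ kernel.ι δ) (by simp)
        = p ≫ pullback.fst _ _ ≫ pullback.fst _ _ := by
      rw [← cancel_mono (kernel.ι δ)]
      simp
    rw [hq]
    infer_instance

variable (V : C → Prop) {A B : ℕ → C}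
  (dA : ∀ n, A (n+1) ⟶ A n) (dB : ∀ n, B (n+1) ⟶ B n)

/-- State of the inductive construction at level `n`. -/
structure St (n : ℕ) where
  K : C
  K' : C
  δ : K' ⟶ K
  t : K ⟶ A n
  t' : K' ⟶ A (n+1)
  c : K ⟶ B n
  c' : K' ⟶ B (n+1)
  hV : V K'
  sqA : t' ≫ dA n = δ ≫ t
  sqB : c' ≫ dB n = δ ≫ c

variable (hV_epi : ∀ X : C, ∃ (P : C) (p : P ⟶ X), V P ∧ Epi p)
  (wA : ∀ n, dA (n+1) ≫ dA n = 0) (wB : ∀ n, dB (n+1) ≫ dB n = 0)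
  (hA : ∀ n, (ShortComplex.mk (dA (n+1)) (dA n) (wA n)).Exact)
  (hB : ∀ n, (ShortComplex.mk (dB (n+1)) (dB n) (wB n)).Exact)

/-- One step of the construction, as a function on states. -/
noncomputable def stepSt (n : ℕ) (s : St V dA dB n) : St V dA dB (n+1) :=
  letI h := step V hV_epi (hA n) (hB n) s.δ s.t s.t' s.c s.c' s.sqA s.sqB
  { K := s.K'
    K' := h.choose
    δ := h.choose_spec.choose
    t := s.t'
    t' := h.choose_spec.choose_spec.choose
    c := s.c'
    c' := h.choose_spec.choose_spec.choose_spec.choose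
    hV := h.choose_spec.choose_spec.choose_spec.choose_spec.choose_spec.1
    sqA := h.choose_spec.choose_spec.choose_spec.choose_spec.choose_spec.2.1
    sqB := h.choose_spec.choose_spec.choose_spec.choose_spec.choose_spec.2.2.1 }

/-- The sequence of states. -/
noncomputable def seq (s0 : St V dA dB 0) : ∀ n, St V dA dB n
  | 0 => s0
  | (n+1) => stepSt V dA dB hV_epi wA wB hA hB n (seq s0 n)

lemma seq_w (s0 : St V dA dB 0) (n : ℕ) :
    (seq V dA dB hV_epi wA wB hA hB s0 (n+1)).δ ≫
      (seq V dA dB hV_epi wA wB hA hB s0 n).δ = 0 :=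
  letI s := seq V dA dB hV_epi wA wB hA hB s0 n
  (step V hV_epi (hA n) (hB n) s.δ s.t s.t' s.c s.c'
    s.sqA s.sqB).choose_spec.choose_spec.choose_spec.choose_spec.choose

lemma seq_exact (s0 : St V dA dB 0) (n : ℕ) :
    (ShortComplex.mk (seq V dA dB hV_epi wA wB hA hB s0 (n+1)).δ
      (seq V dA dB hV_epi wA wB hA hB s0 n).δ
      (seq_w V dA dB hV_epi wA wB hA hB s0 n)).Exact :=
  letI s := seq V dA dB hV_epi wA wB hA hB s0 n
  (step V hV_epi (hA n) (hB n) s.δ s.t s.t' s.c s.c'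
    s.sqA s.sqB).choose_spec.choose_spec.choose_spec.choose_spec.choose_spec.2.2.2

end Stmt6Aux

/-- Let `C` be an abelian category and `V` a full subcategory
(an isomorphism-closed predicate on objects) such that every object of `C` admits an
epimorphism from an object of `V`.  Let `g : F ⟶ G` be a morphism in `C`, and let
`F'`, `G'` be chain complexes concentrated in nonnegative degrees with augmentations
`εF : F'.X 0 ⟶ F` and `εG : G'.X 0 ⟶ G` making the augmented complexes exact.
Then there exist a chain complex `L` concentrated in nonnegative degrees with every
term in `V`, a quasi-isomorphism `τ : L ⟶ F'`, and a chain map `γ : L ⟶ G'` such that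
`γ.f 0 ≫ εG = τ.f 0 ≫ εF ≫ g`. -/
theorem stmt_6 {C : Type*} [Category C] [Abelian C]
    (V : C → Prop)
    (hV_iso : ∀ {X Y : C}, (X ≅ Y) → V X → V Y)
    (hV_epi : ∀ X : C, ∃ (P : C) (p : P ⟶ X), V P ∧ Epi p)
    {F G : C} (g : F ⟶ G)
    (F' G' : ChainComplex C ℕ)
    (εF : F'.X 0 ⟶ F) (hF0 : F'.d 1 0 ≫ εF = 0) (hεF_epi : Epi εF)
    (hF_exact0 : (ShortComplex.mk (F'.d 1 0) εF hF0).Exact)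
    (hF_exact : ∀ n : ℕ, F'.ExactAt (n + 1))
    (εG : G'.X 0 ⟶ G) (hG0 : G'.d 1 0 ≫ εG = 0) (hεG_epi : Epi εG)
    (hG_exact0 : (ShortComplex.mk (G'.d 1 0) εG hG0).Exact)
    (hG_exact : ∀ n : ℕ, G'.ExactAt (n + 1)) :
    ∃ (L : ChainComplex C ℕ) (τ : L ⟶ F') (γ : L ⟶ G'),
      (∀ n : ℕ, V (L.X n)) ∧ QuasiIso τ ∧
      γ.f 0 ≫ εG = τ.f 0 ≫ εF ≫ g := by
  classical
  haveI := hεF_epi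
  haveI := hεG_epi
  -- the augmented graded objects and differentials
  let A : ℕ → C := fun n => Nat.rec (motive := fun _ => C) F (fun k _ => F'.X k) n
  let B : ℕ → C := fun n => Nat.rec (motive := fun _ => C) G (fun k _ => G'.X k) n
  let dA : ∀ n, A (n+1) ⟶ A n :=
    fun n => Nat.rec (motive := fun n => A (n+1) ⟶ A n) εF (fun k _ => F'.d (k+1) k) n
  let dB : ∀ n, B (n+1) ⟶ B n :=
    fun n => Nat.rec (motive := fun n => B (n+1) ⟶ B n) εG (fun k _ => G'.d (k+1) k) n
  have wA : ∀ n : ℕ, dA (n+1) ≫ dA n = 0 := by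
    intro n
    cases n with
    | zero => exact hF0
    | succ k => exact F'.d_comp_d _ _ _
  have wB : ∀ n : ℕ, dB (n+1) ≫ dB n = 0 := by
    intro n
    cases n with
    | zero => exact hG0
    | succ k => exact G'.d_comp_d _ _ _
  have hA : ∀ n, (ShortComplex.mk (dA (n+1)) (dA n) (wA n)).Exact := by
    intro n
    cases n with
    | zero => exact hF_exact0
    | succ k =>
      exact (HomologicalComplex.exactAt_iff' F' (k+1+1) (k+1) k (by simp) (by simp)).1
        (hF_exact k)
  have hB : ∀ n, (ShortComplex.mk (dB (n+1)) (dB n) (wB n)).Exact := by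
    intro n
    cases n with
    | zero => exact hG_exact0
    | succ k =>
      exact (HomologicalComplex.exactAt_iff' G' (k+1+1) (k+1) k (by simp) (by simp)).1
        (hG_exact k)
  -- the base state
  obtain ⟨K0, p0, hV0, hp0⟩ := hV_epi (pullback (εF ≫ g) εG)
  haveI := hp0
  let s0 : Stmt6Aux.St V dA dB 0 :=
    { K := F
      K' := K0
      δ := p0 ≫ pullback.fst (εF ≫ g) εG ≫ εF
      t := 𝟙 F
      t' := p0 ≫ pullback.fst (εF ≫ g) εG
      c := g
      c' := p0 ≫ pullback.snd (εF ≫ g) εG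
      hV := hV0
      sqA := by
        show (p0 ≫ pullback.fst (εF ≫ g) εG) ≫ εF =
          (p0 ≫ pullback.fst (εF ≫ g) εG ≫ εF) ≫ 𝟙 F
        simp
      sqB := by
        show (p0 ≫ pullback.snd (εF ≫ g) εG) ≫ εG =
          (p0 ≫ pullback.fst (εF ≫ g) εG ≫ εF) ≫ g
        simp only [Category.assoc]
        rw [← pullback.condition] }
  let sq := Stmt6Aux.seq V dA dB hV_epi wA wB hA hB s0
  have hw := Stmt6Aux.seq_w V dA dB hV_epi wA wB hA hB s0
  have hex := Stmt6Aux.seq_exact V dA dB hV_epi wA wB hA hB s0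
  -- the complex
  let L : ChainComplex C ℕ := ChainComplex.of (fun n => (sq n).K') (fun n => (sq (n+1)).δ) (fun n => hw (n+1))
  have hd : ∀ k, L.d (k+1) k = (sq (k+1)).δ := fun k => by
    show ChainComplex.of.d (fun n => (sq n).K') (fun n => (sq (n+1)).δ) (k+1) k = _
    exact ChainComplex.of_d _ _ k
  -- the chain maps
  let τ : L ⟶ F' :=
    { f := fun n => (sq n).t'
      comm' := by
        rintro i j (rfl : j + 1 = i)
        rw [hd j]
        exact (sq (j+1)).sqA }
  let γ : L ⟶ G' :=
    { f := fun n => (sq n).c'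
      comm' := by
        rintro i j (rfl : j + 1 = i)
        rw [hd j]
        exact (sq (j+1)).sqB }
  -- homological facts about L
  have h10 : L.d 1 0 = (sq 1).δ := hd 0
  have hL0 : L.d 1 0 ≫ (sq 0).δ = 0 := by rw [h10]; exact hw 0
  have hLex0 : (ShortComplex.mk (L.d 1 0) ((sq 0).δ) hL0).Exact := by
    refine (ShortComplex.exact_iff_of_iso ?_).1 (hex 0)
    exact ShortComplex.isoMk (Iso.refl _) (Iso.refl _) (Iso.refl _)
      (by simp [h10]; exact (Category.id_comp _).trans (Category.comp_id _).symm) (by simp; exact (Category.id_comp _).trans (Category.comp_id _).symm)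
  have hεL_epi : Epi ((sq 0).δ) := by
    show Epi (p0 ≫ pullback.fst (εF ≫ g) εG ≫ εF)
    infer_instance
  have hLexact : ∀ n, L.ExactAt (n+1) := by
    intro n
    rw [HomologicalComplex.exactAt_iff' L (n+1+1) (n+1) n (by simp) (by simp)]
    refine (ShortComplex.exact_iff_of_iso ?_).1 (hex (n+1))
    exact ShortComplex.isoMk (Iso.refl _) (Iso.refl _) (Iso.refl _)
      (by simp [hd (n+1)]; exact (Category.id_comp _).trans (Category.comp_id _).symm) (by simp [hd n]; exact (Category.id_comp _).trans (Category.comp_id _).symm)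
  haveI : QuasiIso ((ChainComplex.toSingle₀Equiv F' F).symm ⟨εF, hF0⟩) :=
    Stmt6Aux.quasiIso_toSingle₀ F' εF hF0 hεF_epi hF_exact0 hF_exact
  haveI : QuasiIso ((ChainComplex.toSingle₀Equiv L F).symm ⟨(sq 0).δ, hL0⟩) :=
    Stmt6Aux.quasiIso_toSingle₀ L ((sq 0).δ) hL0 hεL_epi hLex0 hLexact
  have hcomp : τ ≫ (ChainComplex.toSingle₀Equiv F' F).symm ⟨εF, hF0⟩ =
      (ChainComplex.toSingle₀Equiv L F).symm ⟨(sq 0).δ, hL0⟩ := by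
    ext
    simp only [HomologicalComplex.comp_f, ChainComplex.toSingle₀Equiv_symm_apply_f_zero]
    erw [ChainComplex.toSingle₀Equiv_symm_apply_f_zero]
    show (p0 ≫ pullback.fst (εF ≫ g) εG) ≫ εF = p0 ≫ pullback.fst (εF ≫ g) εG ≫ εF
    rw [Category.assoc]
  haveI hτ : QuasiIso τ :=
    (quasiIso_iff_comp_right τ ((ChainComplex.toSingle₀Equiv F' F).symm ⟨εF, hF0⟩)).1
      (by rw [hcomp]; infer_instance)
  refine ⟨L, τ, γ, fun n => (sq n).hV, hτ, ?_⟩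
  show (p0 ≫ pullback.snd (εF ≫ g) εG) ≫ εG =
    (p0 ≫ pullback.fst (εF ≫ g) εG) ≫ εF ≫ g
  simp only [Category.assoc]
  rw [← pullback.condition]
end

section
/- Let C be an abelian category and V a resolving subcategory of C satisfying the syzygy hypothesis. If 0 → K → M → C → 0 is a short exact sequence in C in which K and C have finite V-dimension, then M has finite V-dimension. -/
open CategoryTheory CategoryTheory.Limits

variable {C : Type*} [Category C] [Abelian C]

namespace Stmt9Aux
open ZeroObject
variable {C : Type*} [Category C] [Abelian C] {V : C → Prop}

lemma exact_of_eq {X Y Z : C} {f f' : X ⟶ Y} {g g' : Y ⟶ Z} (hf : f = f') (hg : g = g')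
    {w : f ≫ g = 0} {w' : f' ≫ g' = 0}
    (he : (ShortComplex.mk f g w).Exact) : (ShortComplex.mk f' g' w').Exact := by
  subst hf; subst hg; exact he

lemma sesOfEpi {Q M : C} (g : Q ⟶ M) [Epi g] :
    (ShortComplex.mk (kernel.ι g) g (kernel.condition g)).ShortExact where
  exact := ShortComplex.exact_of_f_is_kernel _ (kernelIsKernel g)
  mono_f := inferInstance
  epi_g := ‹_›

lemma sesOfExact {X Y Z : C} (f : X ⟶ Y) (g : Y ⟶ Z) (w : f ≫ g = 0)
    (hex : (ShortComplex.mk f g w).Exact) :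
    (ShortComplex.mk (kernel.ι f) (kernel.lift g f w)
      (by rw [← cancel_mono (kernel.ι g), Category.assoc, kernel.lift_ι,
        kernel.condition, zero_comp])).ShortExact where
  exact := by
    rw [ShortComplex.exact_iff_exact_up_to_refinements]
    intro A x₂ hx₂
    have hx : x₂ ≫ f = 0 := by
      have := hx₂ =≫ kernel.ι g
      simpa using this
    exact ⟨A, 𝟙 A, inferInstance, kernel.lift f x₂ hx, by simp⟩
  mono_f := inferInstance
  epi_g := (ShortComplex.exact_iff_epi_kernel_lift _).1 hex

def FD (V : C → Prop) : ℕ → C → Prop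
  | 0, M => V M
  | (n+1), M => FD V n M ∨ ∃ (Z P : C) (f : Z ⟶ P) (g : P ⟶ M) (w : f ≫ g = 0),
      (ShortComplex.mk f g w).ShortExact ∧ V P ∧ FD V n Z

lemma FD.iso (hV : ∀ {X Y : C}, (X ≅ Y) → V X → V Y)
    {n : ℕ} {M M' : C} (e : M ≅ M') (h : FD V n M) : FD V n M' := by
  induction n generalizing M M' with
  | zero => exact hV e h
  | succ n ih =>
    obtain h | ⟨Z, P, f, g, w, hSE, hP, hZ⟩ := h
    · exact Or.inl (ih e h)
    · refine Or.inr ⟨Z, P, f, g ≫ e.hom, by rw [← Category.assoc, w, zero_comp], ?_, hP, hZ⟩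
      exact ShortComplex.shortExact_of_iso
        (ShortComplex.isoMk (S₁ := ShortComplex.mk f g w) (Iso.refl _) (Iso.refl _) e
          (by simp) (by simp)) hSE

lemma chain_exactAt_succ_iff (K : ChainComplex C ℕ) (n : ℕ) :
    K.ExactAt (n+1) ↔ (ShortComplex.mk (K.d (n+2) (n+1)) (K.d (n+1) n)
      (K.d_comp_d _ _ _)).Exact := by
  rw [K.exactAt_iff' (n+2) (n+1) n (by simp) (by simp [ChainComplex.next_nat_succ])]
  rfl

lemma HasFiniteVDim.iso {M M' : C} (e : M ≅ M')
    (h : HasFiniteVDim V M) : HasFiniteVDim V M' := by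
  obtain ⟨L, ε, res, N, hN⟩ := h
  haveI := res.epi
  refine ⟨L, ε ≫ e.hom, ⟨res.mem, inferInstance,
    by rw [← Category.assoc, res.comp_zero, zero_comp], ?_, res.exact⟩, N, hN⟩
  rw [ShortComplex.exact_iff_exact_up_to_refinements]
  intro A x₂ hx₂
  have h0 : x₂ ≫ ε = 0 := by
    apply zero_of_comp_mono e.hom
    rw [Category.assoc]
    exact hx₂
  exact res.exact_zero.exact_up_to_refinements x₂ h0

lemma hasFiniteVDim_of_FD (hV : IsResolving V) {n : ℕ} {M : C}
    (h : FD V n M) : HasFiniteVDim V M := by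
  induction n generalizing M with
  | zero =>
    set XX : ℕ → C := fun k => Nat.rec (motive := fun _ => C) M (fun _ _ => (0 : C)) k with hXX
    set dd : ∀ k, XX (k+1) ⟶ XX k := fun _ => 0 with hdd
    have sq : ∀ k, dd (k+1) ≫ dd k = 0 := fun _ => by simp [hdd]
    set E : ChainComplex C ℕ := ChainComplex.of XX dd sq with hE
    have hd10 : E.d 1 0 = (0 : XX 1 ⟶ XX 0) := ChainComplex.of_d XX dd 0
    refine ⟨E, 𝟙 M, ⟨?_, show Epi (𝟙 M) from inferInstance,
      by rw [hd10, zero_comp], ?_, ?_⟩, 0, ?_⟩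
    · intro k
      cases k with
      | zero => exact h
      | succ m => exact hV.zero_mem _ (isZero_zero C)
    · rw [ShortComplex.exact_iff_exact_up_to_refinements]
      intro A x₂ hx₂
      refine ⟨A, 𝟙 A, inferInstance, 0, ?_⟩
      have hx : x₂ = 0 := by rw [← Category.comp_id x₂]; exact hx₂
      simp [hx]
    · intro k
      rw [HomologicalComplex.exactAt_iff]
      exact ShortComplex.exact_of_isZero_X₂ _ (isZero_zero C)
    · intro k hk
      cases k with
      | zero => omega
      | succ m => exact isZero_zero C
  | succ n ih =>
    obtain h | ⟨Z, P, f, g, w, hSE, hP, hZ⟩ := h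
    · exact ih h
    · obtain ⟨L, εL, res, N, hN⟩ := ih hZ
      haveI := hSE.epi_g
      haveI : Mono f := hSE.mono_f
      haveI := res.epi
      set XX : ℕ → C := fun k => Nat.rec P (fun m _ => L.X m) k with hXX
      set dd : ∀ k, XX (k+1) ⟶ XX k := fun k => Nat.rec
        (motive := fun k => XX (k+1) ⟶ XX k) (εL ≫ f) (fun m _ => L.d (m+1) m) k with hdd
      have sq : ∀ k, dd (k+1) ≫ dd k = 0 := by
        intro k
        cases k with
        | zero =>
          show L.d 1 0 ≫ (εL ≫ f) = 0
          rw [← Category.assoc, res.comp_zero, zero_comp]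
        | succ m => exact L.d_comp_d _ _ _
      set E : ChainComplex C ℕ := ChainComplex.of XX dd sq with hE
      have hd10 : E.d 1 0 = εL ≫ f := ChainComplex.of_d XX dd 0
      have hdk : ∀ m : ℕ, E.d (m+2) (m+1) = L.d (m+1) m :=
        fun m => ChainComplex.of_d XX dd (m+1)
      have hcz : E.d 1 0 ≫ g = 0 := by
        rw [hd10, Category.assoc, w, comp_zero]
      have hex0 : (ShortComplex.mk (εL ≫ f) g
          (by rw [Category.assoc, w, comp_zero])).Exact := by
        rw [ShortComplex.exact_iff_exact_up_to_refinements]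
        intro A x₂ hx₂
        obtain ⟨A', π, hπ, x₁, fac⟩ := hSE.exact.exact_up_to_refinements x₂ hx₂
        obtain ⟨A'', π', hπ', y, fac'⟩ := surjective_up_to_refinements_of_epi εL x₁
        refine ⟨A'', π' ≫ π, epi_comp _ _, y, ?_⟩
        exact calc
          (π' ≫ π) ≫ x₂ = π' ≫ π ≫ x₂ := Category.assoc _ _ _
          _ = π' ≫ x₁ ≫ (ShortComplex.mk f g w).f := whisker_eq π' fac
          _ = (π' ≫ x₁) ≫ (ShortComplex.mk f g w).f := (Category.assoc _ _ _).symm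
          _ = (y ≫ εL) ≫ (ShortComplex.mk f g w).f := eq_whisker fac' _
          _ = y ≫ εL ≫ (ShortComplex.mk f g w).f := Category.assoc _ _ _
      refine ⟨E, g, ⟨?_, inferInstance, hcz, exact_of_eq hd10.symm rfl hex0, ?_⟩, N + 1, ?_⟩
      · intro k
        cases k with
        | zero => exact hP
        | succ m => exact res.mem m
      · intro k
        rw [chain_exactAt_succ_iff]
        cases k with
        | zero =>
          have w10 : L.d 1 0 ≫ (εL ≫ f) = 0 := by
            rw [← Category.assoc, res.comp_zero, zero_comp]
          have hex1 : (ShortComplex.mk (L.d 1 0) (εL ≫ f) w10).Exact := by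
            rw [ShortComplex.exact_iff_exact_up_to_refinements]
            intro A x₂ hx₂
            have h0 : x₂ ≫ εL = 0 := by
              apply zero_of_comp_mono f
              rw [Category.assoc]
              exact hx₂
            exact res.exact_zero.exact_up_to_refinements x₂ h0
          exact exact_of_eq (hdk 0).symm hd10.symm hex1
        | succ m =>
          exact exact_of_eq (hdk (m+1)).symm (hdk m).symm
            ((chain_exactAt_succ_iff L m).1 (res.exact m))
      · intro k hk
        cases k with
        | zero => omega
        | succ m => exact hN m (by omega)

lemma fd_of_hasFiniteVDim (hV : IsResolving V) {M : C}
    (h : HasFiniteVDim V M) : ∃ n, FD V n M := by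
  obtain ⟨L, ε, res, N, hN⟩ := h
  haveI := res.epi
  have key : ∀ (j k : ℕ), N ≤ k + j → FD V j (kernel (L.d (k+1) k)) := by
    intro j
    induction j with
    | zero =>
      intro k hk
      exact hV.zero_mem _ (IsZero.of_mono (kernel.ι _) (hN (k+1) (by omega)))
    | succ j ih =>
      intro k hk
      have hses := sesOfExact (L.d (k+2) (k+1)) (L.d (k+1) k) (L.d_comp_d _ _ _)
        ((chain_exactAt_succ_iff L k).1 (res.exact k))
      exact Or.inr ⟨_, _, _, _, _, hses, res.mem (k+2), ih (k+1) (by omega)⟩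
  have h1 : FD V (N+1) (kernel ε) :=
    Or.inr ⟨_, _, _, _, _, sesOfExact (L.d 1 0) ε res.comp_zero res.exact_zero,
      res.mem 1, key N 0 (by omega)⟩
  exact ⟨N+2, Or.inr ⟨_, _, _, _, _, sesOfEpi ε, res.mem 0, h1⟩⟩

end Stmt9Aux

namespace Stmt9Aux
variable {C : Type*} [Category C] [Abelian C] {V : C → Prop}

/-- A stage of an iteratively constructed resolution. -/
structure Tow (V : C → Prop) where
  K : C
  Ob : C
  e : Ob ⟶ K
  mem : V Ob
  epi : Epi e

noncomputable def stepEpi (hV : IsResolving V) (K : C) :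
    Σ' (P : C) (e : P ⟶ K), V P ∧ Epi e :=
  ⟨(hV.epi_from K).choose, (hV.epi_from K).choose_spec.choose,
    (hV.epi_from K).choose_spec.choose_spec.1, (hV.epi_from K).choose_spec.choose_spec.2⟩

noncomputable def tower (hV : IsResolving V) {P M : C} (p : P ⟶ M) (hP : V P) (hp : Epi p) :
    ℕ → Tow V := fun n =>
  Nat.rec ⟨M, P, p, hP, hp⟩
    (fun _ prev => ⟨kernel prev.e, (stepEpi hV (kernel prev.e)).1,
      (stepEpi hV (kernel prev.e)).2.1, (stepEpi hV (kernel prev.e)).2.2.1,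
      (stepEpi hV (kernel prev.e)).2.2.2⟩) n

lemma syzLemma (hV : IsResolving V) (hSyz : SyzygyHyp V) {P M : C}
    (p : P ⟶ M) (hp : Epi p) (hP : V P) (hM : HasFiniteVDim V M) :
    ∃ m, FD V m (kernel p) := by
  set T := tower hV p hP hp with hT
  haveI hepi : ∀ n, Epi (T n).e := fun n => (T n).epi
  set dd : ∀ n, (T (n+1)).Ob ⟶ (T n).Ob :=
    fun n => (T (n+1)).e ≫ kernel.ι ((T n).e) with hdd
  have sq : ∀ n, dd (n+1) ≫ dd n = 0 := by
    intro n
    rw [hdd]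
    exact ((Category.assoc _ _ _).trans (whisker_eq _ ((kernel.condition_assoc _ _).trans zero_comp))).trans comp_zero
  set E : ChainComplex C ℕ := ChainComplex.of (fun n => (T n).Ob) dd sq with hE
  have hd : ∀ n, E.d (n+1) n = dd n := fun n =>
    ChainComplex.of_d (fun n => (T n).Ob) dd n
  have hres : IsVResolution V M E p := by
    refine ⟨fun n => (T n).mem, hp, ?_, ?_, ?_⟩
    · have h0 : kernel.ι ((T 0).e) ≫ p = 0 := kernel.condition ((T 0).e)
      rw [hd 0, hdd]; exact (Category.assoc _ _ _).trans ((whisker_eq _ h0).trans comp_zero)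
    · refine exact_of_eq (hd 0).symm rfl
        (w := by
          have h0 : kernel.ι ((T 0).e) ≫ p = 0 := kernel.condition ((T 0).e)
          rw [hdd]; exact (Category.assoc _ _ _).trans ((whisker_eq _ h0).trans comp_zero)) ?_
      rw [ShortComplex.exact_iff_exact_up_to_refinements]
      intro A x₂ hx₂
      have hz : x₂ ≫ (T 0).e = 0 := hx₂
      obtain ⟨A', π, hπ, y, fac⟩ :=
        surjective_up_to_refinements_of_epi ((T 1).e) (kernel.lift ((T 0).e) x₂ hz)
      refine ⟨A', π, hπ, y, ?_⟩
      exact calc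
        π ≫ x₂ = π ≫ kernel.lift ((T 0).e) x₂ hz ≫ kernel.ι ((T 0).e) :=
          whisker_eq π (kernel.lift_ι _ _ _).symm
        _ = (π ≫ kernel.lift ((T 0).e) x₂ hz) ≫ kernel.ι ((T 0).e) :=
          (Category.assoc _ _ _).symm
        _ = (y ≫ (T 1).e) ≫ kernel.ι ((T 0).e) := eq_whisker fac _
        _ = y ≫ (T 1).e ≫ kernel.ι ((T 0).e) := Category.assoc _ _ _
    · intro n
      rw [chain_exactAt_succ_iff]
      refine exact_of_eq (hd (n+1)).symm (hd n).symm (w := sq n) ?_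
      rw [ShortComplex.exact_iff_exact_up_to_refinements]
      intro A x₂ hx₂
      have hz : x₂ ≫ (T (n+1)).e = 0 := by
        apply zero_of_comp_mono (kernel.ι ((T n).e))
        exact (Category.assoc _ _ _).trans hx₂
      obtain ⟨A', π, hπ, y, fac⟩ :=
        surjective_up_to_refinements_of_epi ((T (n+2)).e)
          (kernel.lift ((T (n+1)).e) x₂ hz)
      refine ⟨A', π, hπ, y, ?_⟩
      exact calc
        π ≫ x₂ = π ≫ kernel.lift ((T (n+1)).e) x₂ hz ≫ kernel.ι ((T (n+1)).e) :=
          whisker_eq π (kernel.lift_ι _ _ _).symm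
        _ = (π ≫ kernel.lift ((T (n+1)).e) x₂ hz) ≫ kernel.ι ((T (n+1)).e) :=
          (Category.assoc _ _ _).symm
        _ = (y ≫ (T (n+2)).e) ≫ kernel.ι ((T (n+1)).e) := eq_whisker fac _
        _ = y ≫ (T (n+2)).e ≫ kernel.ι ((T (n+1)).e) := Category.assoc _ _ _
  obtain ⟨N, hN⟩ := hSyz M E p hM hres
  have hNV : ∀ n, N ≤ n → V (kernel ((T (n+1)).e)) := by
    intro n hn
    refine hV.iso_closed ((kernelIsoOfEq (hd n)).trans ?_) (hN n hn)
    exact kernelCompMono (show (T (n+1)).Ob ⟶ kernel ((T n).e) from (T (n+1)).e) (kernel.ι ((T n).e))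
  have hchain : ∀ j k, N + 1 ≤ k + j → FD V j (kernel ((T k).e)) := by
    intro j
    induction j with
    | zero =>
      intro k hk
      match k, hk with
      | (n+1), hk => exact hNV n (by omega)
    | succ j ih =>
      intro k hk
      haveI := (T (k+1)).epi
      exact Or.inr ⟨_, _, _, _, _, sesOfEpi ((T (k+1)).e), (T (k+1)).mem,
        ih (k+1) (by omega)⟩
  exact ⟨N+1, hchain (N+1) 0 (by omega)⟩

end Stmt9Aux

namespace Stmt9Aux
variable {C : Type*} [Category C] [Abelian C] {V : C → Prop}

lemma sesKer {Q B M : C} (q : Q ⟶ B) (g : B ⟶ M) [Epi q] :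
    ∃ (α : kernel q ⟶ kernel (q ≫ g)) (β : kernel (q ≫ g) ⟶ kernel g)
      (w : α ≫ β = 0), (ShortComplex.mk α β w).ShortExact := by
  refine ⟨kernel.lift (q ≫ g) (kernel.ι q)
      (by rw [kernel.condition_assoc, zero_comp]),
    kernel.lift g (kernel.ι (q ≫ g) ≫ q)
      (by rw [Category.assoc, kernel.condition]),
    by rw [← cancel_mono (kernel.ι g)]; simp, ?_⟩
  refine { exact := ?exact, mono_f := ?mono_f, epi_g := ?epi_g }
  case mono_f => exact mono_of_mono_fac (kernel.lift_ι _ _ _)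
  case epi_g =>
    rw [epi_iff_surjective_up_to_refinements]
    intro A y
    obtain ⟨A', π, hπ, x, fac⟩ := surjective_up_to_refinements_of_epi q (y ≫ kernel.ι g)
    have hx : x ≫ q ≫ g = 0 := by
      rw [← Category.assoc, ← fac]
      simp
    refine ⟨A', π, hπ, kernel.lift _ x hx, ?_⟩
    rw [← cancel_mono (kernel.ι g)]
    simp only [Category.assoc, kernel.lift_ι, ← Category.assoc, kernel.lift_ι]
    simpa using fac
  case exact =>
    rw [ShortComplex.exact_iff_exact_up_to_refinements]
    intro A x₂ hx₂
    have hx : (x₂ ≫ kernel.ι (q ≫ g)) ≫ q = 0 := by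
      have := hx₂ =≫ kernel.ι g
      simpa using this
    refine ⟨A, 𝟙 A, inferInstance, kernel.lift q (x₂ ≫ kernel.ι (q ≫ g)) hx, ?_⟩
    rw [← cancel_mono (kernel.ι (q ≫ g))]
    simp

lemma sesPullback {M P Co : C} (f : M ⟶ Co) (e : P ⟶ Co) [Epi e] :
    ∃ (k : kernel e ⟶ pullback f e) (w : k ≫ pullback.fst f e = 0),
      (ShortComplex.mk k (pullback.fst f e) w).ShortExact := by
  refine ⟨pullback.lift 0 (kernel.ι e) (by simp [kernel.condition]), pullback.lift_fst _ _ _, ?_⟩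
  refine { exact := ?exact, mono_f := ?mono_f, epi_g := ?epi_g }
  case mono_f => exact mono_of_mono_fac (pullback.lift_snd _ _ _)
  case epi_g => infer_instance
  case exact =>
    rw [ShortComplex.exact_iff_exact_up_to_refinements]
    intro A x₂ hx₂
    have hx : (x₂ ≫ pullback.snd f e) ≫ e = 0 := by
      rw [Category.assoc, ← pullback.condition, ← Category.assoc]
      simpa using hx₂ =≫ f
    refine ⟨A, 𝟙 A, inferInstance, kernel.lift e (x₂ ≫ pullback.snd f e) hx, ?_⟩
    apply pullback.hom_ext <;> simp [hx₂, pullback.lift_fst, pullback.lift_snd]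

lemma isoKernel {S : ShortComplex C} (hS : S.ShortExact) :
    Nonempty (S.X₁ ≅ kernel S.g) :=
  ⟨IsLimit.conePointUniqueUpToIso hS.fIsKernel (limit.isLimit _)⟩

lemma main0 (hV : IsResolving V) (hSyz : SyzygyHyp V) (S : ShortComplex C)
    (hS : S.ShortExact) (hK : HasFiniteVDim V S.X₁) (hCo : V S.X₃) :
    HasFiniteVDim V S.X₂ := by
  haveI := hS.epi_g
  obtain ⟨Q, q, hQ, hq⟩ := hV.epi_from S.X₂
  haveI := hq
  haveI : Epi (q ≫ S.g) := epi_comp _ _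
  have hKer : V (kernel (q ≫ S.g)) :=
    hV.ker_of_epi_mem _ (sesOfEpi (q ≫ S.g)) hQ hCo
  obtain ⟨α, β, w, hT⟩ := sesKer q S.g
  haveI := hT.epi_g
  obtain ⟨e⟩ := isoKernel hS
  have hKg : HasFiniteVDim V (kernel S.g) := HasFiniteVDim.iso e hK
  obtain ⟨m, hm⟩ := syzLemma hV hSyz β hT.epi_g hKer hKg
  obtain ⟨e'⟩ := isoKernel hT
  have hq' : FD V m (kernel q) := FD.iso (fun h => hV.iso_closed h) e'.symm hm
  have hfd : FD V (m+1) S.X₂ := Or.inr ⟨_, _, _, _, _, sesOfEpi q, hQ, hq'⟩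
  exact hasFiniteVDim_of_FD hV hfd

lemma fStep (hV : IsResolving V) (hSyz : SyzygyHyp V) (n : ℕ)
    (hmain : ∀ S : ShortComplex C, S.ShortExact → HasFiniteVDim V S.X₁ →
      FD V n S.X₃ → HasFiniteVDim V S.X₂) :
    ∀ S : ShortComplex C, S.ShortExact → FD V n S.X₁ → HasFiniteVDim V S.X₂ →
      HasFiniteVDim V S.X₃ := by
  intro S hS hA hB
  haveI := hS.epi_g
  obtain ⟨Q, q, hQ, hq⟩ := hV.epi_from S.X₂
  haveI := hq
  haveI : Epi (q ≫ S.g) := epi_comp _ _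
  obtain ⟨m₀, hZB⟩ := syzLemma hV hSyz q hq hQ hB
  obtain ⟨α, β, w, hT⟩ := sesKer q S.g
  obtain ⟨e⟩ := isoKernel hS
  have hX₃ : FD V n (kernel S.g) := FD.iso (fun h => hV.iso_closed h) e hA
  have hA' : HasFiniteVDim V (kernel (q ≫ S.g)) :=
    hmain (ShortComplex.mk α β w) hT (hasFiniteVDim_of_FD hV hZB) hX₃
  obtain ⟨m₁, hm₁⟩ := fd_of_hasFiniteVDim hV hA'
  have hfd : FD V (m₁+1) S.X₃ := Or.inr ⟨_, _, _, _, _, sesOfEpi (q ≫ S.g), hQ, hm₁⟩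
  exact hasFiniteVDim_of_FD hV hfd

lemma mainAll (hV : IsResolving V) (hSyz : SyzygyHyp V) : ∀ n : ℕ,
    (∀ S : ShortComplex C, S.ShortExact → HasFiniteVDim V S.X₁ →
      FD V n S.X₃ → HasFiniteVDim V S.X₂) ∧
    (∀ S : ShortComplex C, S.ShortExact → FD V n S.X₁ → HasFiniteVDim V S.X₂ →
      HasFiniteVDim V S.X₃) := by
  intro n
  induction n with
  | zero =>
    refine ⟨fun S hS hK hCo => main0 hV hSyz S hS hK hCo, ?_⟩
    exact fStep hV hSyz 0 (fun S hS hK hCo => main0 hV hSyz S hS hK hCo)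
  | succ n ih =>
    have hmain : ∀ S : ShortComplex C, S.ShortExact → HasFiniteVDim V S.X₁ →
        FD V (n+1) S.X₃ → HasFiniteVDim V S.X₂ := by
      intro S hS hK hCo
      obtain hCo | ⟨Z, P0, f', e', w', hSE', hP0, hZ⟩ := hCo
      · exact ih.1 S hS hK hCo
      · haveI := hS.epi_g
        haveI := hSE'.epi_g
        obtain ⟨k₂, w₂, hT₂⟩ := sesPullback e' S.g
        obtain ⟨eK⟩ := isoKernel hS
        have hW₂ : HasFiniteVDim V (pullback e' S.g) :=
          main0 hV hSyz _ hT₂ (HasFiniteVDim.iso eK hK) hP0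
        have hW₁ : HasFiniteVDim V (pullback S.g e') :=
          HasFiniteVDim.iso (pullbackSymmetry e' S.g) hW₂
        obtain ⟨k₁, w₁, hT₁⟩ := sesPullback S.g e'
        obtain ⟨eZ⟩ := isoKernel hSE'
        have hZ' : FD V n (kernel e') := FD.iso (fun h => hV.iso_closed h) eZ hZ
        exact ih.2 (ShortComplex.mk k₁ (pullback.fst S.g e') w₁) hT₁ hZ' hW₁
    exact ⟨hmain, fStep hV hSyz (n+1) hmain⟩

end Stmt9Aux


/-- Let `C` be an abelian category and `V` a resolving subcategory of
`C` satisfying the syzygy hypothesis.  If `0 → K → M → Co → 0` is a short exact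
sequence in `C` in which `K` and `Co` have finite `V`-dimension, then `M` has
finite `V`-dimension. -/
theorem stmt_9 {C : Type*} [Category C] [Abelian C]
    (V : C → Prop) (hV : IsResolving V) (hSyz : SyzygyHyp V)
    (S : ShortComplex C) (hS : S.ShortExact)
    (hK : HasFiniteVDim V S.X₁) (hCo : HasFiniteVDim V S.X₃) :
    HasFiniteVDim V S.X₂ := by
  obtain ⟨n, hn⟩ := Stmt9Aux.fd_of_hasFiniteVDim hV hCo
  exact (Stmt9Aux.mainAll hV hSyz n).1 S hS hK hn
end

section
/- Let C be an abelian category and V a resolving subcategory of C satisfying the syzygy hypothesis. If f : M → N is an epimorphism in C where both M and N have finite V-dimension, then ker f has finite V-dimension. -/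
open CategoryTheory CategoryTheory.Limits

variable {C : Type*} [Category C] [Abelian C]

namespace Stmt10Aux


lemma exact_kernel_seq {X Y : C} (f : X ⟶ Y) :
    (ShortComplex.mk (kernel.ι f) f (kernel.condition f)).Exact :=
  ShortComplex.exact_of_f_is_kernel _ (kernelIsKernel f)

lemma shortExact_kernel_seq {X Y : C} (f : X ⟶ Y) [Epi f] :
    (ShortComplex.mk (kernel.ι f) f (kernel.condition f)).ShortExact := by
  refine ShortComplex.ShortExact.mk' (exact_kernel_seq f) ?_ ?_
  · dsimp; infer_instance
  · dsimp; infer_instance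

lemma exact_comp_mono_iff {X Y Z W : C} (f : X ⟶ Y) (g : Y ⟶ Z) (m : Z ⟶ W) [Mono m]
    (w : f ≫ g = 0) (w' : f ≫ (g ≫ m) = 0) :
    (ShortComplex.mk f (g ≫ m) w').Exact ↔ (ShortComplex.mk f g w).Exact := by
  let φ : ShortComplex.mk f g w ⟶ ShortComplex.mk f (g ≫ m) w' :=
    { τ₁ := 𝟙 _, τ₂ := 𝟙 _, τ₃ := m, comm₁₂ := by simp, comm₂₃ := by simp }
  haveI : Epi φ.τ₁ := by dsimp [φ]; infer_instance
  haveI : IsIso φ.τ₂ := by dsimp [φ]; infer_instance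
  haveI : Mono φ.τ₃ := by dsimp [φ]; infer_instance
  exact (ShortComplex.exact_iff_of_epi_of_isIso_of_mono φ).symm

lemma exact_epi_comp_iff {A X Y Z : C} (e : A ⟶ X) [Epi e] (f : X ⟶ Y) (g : Y ⟶ Z)
    (w : f ≫ g = 0) (w' : (e ≫ f) ≫ g = 0) :
    (ShortComplex.mk (e ≫ f) g w').Exact ↔ (ShortComplex.mk f g w).Exact := by
  let φ : ShortComplex.mk (e ≫ f) g w' ⟶ ShortComplex.mk f g w :=
    { τ₁ := e, τ₂ := 𝟙 _, τ₃ := 𝟙 _, comm₁₂ := by simp, comm₂₃ := by simp }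
  haveI : Epi φ.τ₁ := by dsimp [φ]; infer_instance
  haveI : IsIso φ.τ₂ := by dsimp [φ]; infer_instance
  haveI : Mono φ.τ₃ := by dsimp [φ]; infer_instance
  exact ShortComplex.exact_iff_of_epi_of_isIso_of_mono φ

lemma tower_exact' {A B Z : C} (q : B ⟶ Z) (a : A ⟶ kernel q) [Epi a]
    (w : (a ≫ kernel.ι q) ≫ q = 0) :
    (ShortComplex.mk (a ≫ kernel.ι q) q w).Exact := by
  rw [show a ≫ kernel.ι q = a ≫ kernel.ι q from rfl] at w
  rw [exact_epi_comp_iff a (kernel.ι q) q (kernel.condition q) w]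
  exact exact_kernel_seq q

lemma tower_exact {A B Z W : C} (q : B ⟶ Z) (a : A ⟶ kernel q) [Epi a]
    (m : Z ⟶ W) [Mono m] (w : (a ≫ kernel.ι q) ≫ (q ≫ m) = 0) :
    (ShortComplex.mk (a ≫ kernel.ι q) (q ≫ m) w).Exact := by
  rw [exact_comp_mono_iff (a ≫ kernel.ι q) q m (by simp) w]
  exact tower_exact' q a _

/-- diagram chase: for an epi `ε : L ⟶ M` and a map `f : M ⟶ N`, the induced map
`kernel (ε ≫ f) ⟶ kernel f` is epi and its kernel is isomorphic to `kernel ε`. -/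
lemma chase {L M N : C} (ε : L ⟶ M) [Epi ε] (f : M ⟶ N) :
    ∃ g : kernel (ε ≫ f) ⟶ kernel f, Epi g ∧ Nonempty (kernel g ≅ kernel ε) := by
  have hcond : kernel.ι (ε ≫ f) ≫ ε ≫ f = 0 := kernel.condition (ε ≫ f)
  refine ⟨kernel.lift f (kernel.ι (ε ≫ f) ≫ ε) (by rw [Category.assoc]; exact hcond), ?_, ?_⟩
  · rw [CategoryTheory.epi_iff_surjective_up_to_refinements]
    intro A y
    obtain ⟨A', π, hπ, x, hx⟩ :=
      CategoryTheory.surjective_up_to_refinements_of_epi ε (y ≫ kernel.ι f)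
    have hx0 : x ≫ ε ≫ f = 0 := by
      rw [← Category.assoc, ← hx]; simp
    refine ⟨A', π, hπ, kernel.lift (ε ≫ f) x hx0, ?_⟩
    rw [← cancel_mono (kernel.ι f)]
    simp only [Category.assoc, kernel.lift_ι, kernel.lift_ι_assoc]
    exact hx
  · -- kernel of g ≅ kernel ε
    set g := kernel.lift f (kernel.ι (ε ≫ f) ≫ ε) (by rw [Category.assoc]; exact hcond) with hg
    have hgι : g ≫ kernel.ι f = kernel.ι (ε ≫ f) ≫ ε := kernel.lift_ι _ _ _
    have hu0 : kernel.ι ε ≫ ε ≫ f = 0 := by rw [← Category.assoc, kernel.condition, zero_comp]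
    set u := kernel.lift (ε ≫ f) (kernel.ι ε) hu0 with hu
    have huι : u ≫ kernel.ι (ε ≫ f) = kernel.ι ε := kernel.lift_ι _ _ _
    have hug : u ≫ g = 0 := by
      rw [← cancel_mono (kernel.ι f), Category.assoc, hgι, ← Category.assoc, huι,
        kernel.condition, zero_comp]
    set v := kernel.lift g u hug with hv
    have hvι : v ≫ kernel.ι g = u := kernel.lift_ι _ _ _
    have hw0 : (kernel.ι g ≫ kernel.ι (ε ≫ f)) ≫ ε = 0 := by
      rw [Category.assoc, ← hgι, ← Category.assoc, kernel.condition, zero_comp]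
    set w := kernel.lift ε (kernel.ι g ≫ kernel.ι (ε ≫ f)) hw0 with hw
    have hwι : w ≫ kernel.ι ε = kernel.ι g ≫ kernel.ι (ε ≫ f) := kernel.lift_ι _ _ _
    refine ⟨⟨w, v, ?_, ?_⟩⟩
    · rw [← cancel_mono (kernel.ι g), Category.assoc, hvι, Category.id_comp,
        ← cancel_mono (kernel.ι (ε ≫ f)), Category.assoc, huι, hwι]
    · rw [← cancel_mono (kernel.ι ε), Category.assoc, hwι, ← Category.assoc, hvι, huι,
        Category.id_comp]



/-- kernel of `pullback.snd f g ≅ kernel f`. -/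
lemma kernel_pullback_snd {X Y Z : C} (f : X ⟶ Z) (g : Y ⟶ Z) :
    Nonempty (kernel (pullback.snd f g) ≅ kernel f) := by
  have h1 : kernel.ι f ≫ f = (0 : kernel f ⟶ Y) ≫ g := by simp
  set j : kernel f ⟶ pullback f g := pullback.lift (kernel.ι f) 0 h1 with hj
  have hjsnd : j ≫ pullback.snd f g = 0 := pullback.lift_snd _ _ _
  set k1 := kernel.lift (pullback.snd f g) j hjsnd with hk1
  have hk1ι : k1 ≫ kernel.ι (pullback.snd f g) = j := kernel.lift_ι _ _ _
  have h2 : (kernel.ι (pullback.snd f g) ≫ pullback.fst f g) ≫ f = 0 := by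
    rw [Category.assoc, pullback.condition, ← Category.assoc, kernel.condition, zero_comp]
  set k2 := kernel.lift f (kernel.ι (pullback.snd f g) ≫ pullback.fst f g) h2 with hk2
  have hk2ι : k2 ≫ kernel.ι f = kernel.ι (pullback.snd f g) ≫ pullback.fst f g :=
    kernel.lift_ι _ _ _
  refine ⟨⟨k2, k1, ?_, ?_⟩⟩
  · -- k2 ≫ k1 = 𝟙 (kernel (pullback.snd f g))
    rw [← cancel_mono (kernel.ι (pullback.snd f g)), Category.assoc, hk1ι, Category.id_comp]
    apply pullback.hom_ext
    · rw [Category.assoc, hj, pullback.lift_fst, hk2ι]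
    · rw [Category.assoc, hj, pullback.lift_snd, comp_zero, kernel.condition]
  · -- k1 ≫ k2 = 𝟙 (kernel f)
    rw [← cancel_mono (kernel.ι f), Category.assoc, hk2ι, ← Category.assoc, hk1ι,
      Category.id_comp, hj, pullback.lift_fst]

lemma kernel_pullback_fst {X Y Z : C} (f : X ⟶ Z) (g : Y ⟶ Z) :
    Nonempty (kernel (pullback.fst f g) ≅ kernel g) := by
  have h1 : (0 : kernel g ⟶ X) ≫ f = kernel.ι g ≫ g := by simp
  set j : kernel g ⟶ pullback f g := pullback.lift 0 (kernel.ι g) h1 with hj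
  have hjfst : j ≫ pullback.fst f g = 0 := pullback.lift_fst _ _ _
  set k1 := kernel.lift (pullback.fst f g) j hjfst with hk1
  have hk1ι : k1 ≫ kernel.ι (pullback.fst f g) = j := kernel.lift_ι _ _ _
  have h2 : (kernel.ι (pullback.fst f g) ≫ pullback.snd f g) ≫ g = 0 := by
    rw [Category.assoc, ← pullback.condition, ← Category.assoc, kernel.condition, zero_comp]
  set k2 := kernel.lift g (kernel.ι (pullback.fst f g) ≫ pullback.snd f g) h2 with hk2
  have hk2ι : k2 ≫ kernel.ι g = kernel.ι (pullback.fst f g) ≫ pullback.snd f g :=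
    kernel.lift_ι _ _ _
  refine ⟨⟨k2, k1, ?_, ?_⟩⟩
  · rw [← cancel_mono (kernel.ι (pullback.fst f g)), Category.assoc, hk1ι, Category.id_comp]
    apply pullback.hom_ext
    · rw [Category.assoc, hj, pullback.lift_fst, comp_zero, kernel.condition]
    · rw [Category.assoc, hj, pullback.lift_snd, hk2ι]
  · rw [← cancel_mono (kernel.ι g), Category.assoc, hk2ι, ← Category.assoc, hk1ι,
      Category.id_comp, hj, pullback.lift_snd]



def FRes (V : C → Prop) : ℕ → C → Prop
  | 0, X => V X
  | n+1, X => ∃ (P : C) (p : P ⟶ X), V P ∧ Epi p ∧ FRes V n (kernel p)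

variable {V : C → Prop}

lemma fres_iso (hV : IsResolving V) :
    ∀ (n : ℕ) {X Y : C}, (X ≅ Y) → FRes V n X → FRes V n Y := by
  intro n
  induction n with
  | zero => exact fun e h => hV.iso_closed e h
  | succ n ih =>
    rintro X Y e ⟨P, p, hP, hp, hk⟩
    refine ⟨P, p ≫ e.hom, hP, epi_comp _ _, ?_⟩
    exact ih (kernelCompMono p e.hom).symm hk

lemma fres_mono (hV : IsResolving V) :
    ∀ (n : ℕ) {X : C}, FRes V n X → FRes V (n + 1) X := by
  intro n
  induction n with
  | zero =>
    intro X hX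
    refine ⟨X, 𝟙 X, hX, inferInstance, ?_⟩
    exact hV.zero_mem _ ((isZero_zero C).of_iso (kernel.ofMono (𝟙 X)))
  | succ n ih =>
    rintro X ⟨P, p, hP, hp, hk⟩
    exact ⟨P, p, hP, hp, ih hk⟩


lemma fres_of_hasFiniteVDim (hV : IsResolving V) {M : C} (h : HasFiniteVDim V M) :
    ∃ n, FRes V n M := by
  obtain ⟨L, ε, hres, Nb, hNb⟩ := h
  have key : ∀ k n, Nb ≤ n + k → FRes V k (kernel (L.d (n+1) n)) := by
    intro k
    induction k with
    | zero =>
      intro n hn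
      have hz : IsZero (L.X (n+1)) := hNb _ (by omega)
      exact hV.zero_mem _ (IsZero.of_mono (kernel.ι (L.d (n+1) n)) hz)
    | succ k ih =>
      intro n hn
      have hex : (L.sc' (n+1+1) (n+1) n).Exact := by
        rw [← HomologicalComplex.exactAt_iff' L (n+1+1) (n+1) n
          (by simp [ChainComplex.prev]) (by simp [ChainComplex.next_nat_succ])]
        exact hres.exact n
      have hepi : Epi (kernel.lift (L.d (n+1) n) (L.d (n+1+1) (n+1)) (L.d_comp_d _ _ _)) :=
        (ShortComplex.exact_iff_epi_kernel_lift _).1 hex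
      have hlift : kernel.lift (L.d (n+1) n) (L.d (n+1+1) (n+1)) (L.d_comp_d _ _ _) ≫
          kernel.ι (L.d (n+1) n) = L.d (n+1+1) (n+1) := kernel.lift_ι _ _ _
      have iso : kernel (L.d (n+1+1) (n+1)) ≅
          kernel (kernel.lift (L.d (n+1) n) (L.d (n+1+1) (n+1)) (L.d_comp_d _ _ _)) :=
        (kernelIsoOfEq hlift).symm ≪≫ kernelCompMono _ _
      exact ⟨L.X (n+1+1), kernel.lift (L.d (n+1) n) (L.d (n+1+1) (n+1)) (L.d_comp_d _ _ _),
        hres.mem _, hepi, fres_iso hV k iso (ih (n+1) (by omega))⟩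
  have hepi0 : Epi (kernel.lift ε (L.d 1 0) hres.comp_zero) :=
    (ShortComplex.exact_iff_epi_kernel_lift _).1 hres.exact_zero
  have hlift0 : kernel.lift ε (L.d 1 0) hres.comp_zero ≫ kernel.ι ε = L.d 1 0 :=
    kernel.lift_ι _ _ _
  have iso0 : kernel (L.d 1 0) ≅ kernel (kernel.lift ε (L.d 1 0) hres.comp_zero) :=
    (kernelIsoOfEq hlift0).symm ≪≫ kernelCompMono _ _
  have h1 : FRes V (Nb+1) (kernel ε) :=
    ⟨L.X 1, kernel.lift ε (L.d 1 0) hres.comp_zero, hres.mem 1, hepi0,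
      fres_iso hV Nb iso0 (key Nb 0 (by omega))⟩
  have := hres.epi
  exact ⟨Nb+2, L.X 0, ε, hres.mem 0, hres.epi, h1⟩


lemma exact_of_eq {X Y Z : C} {f f' : X ⟶ Y} {g g' : Y ⟶ Z} {w : f ≫ g = 0}
    (hf : f = f') (hg : g = g') (w' : f' ≫ g' = 0)
    (h : (ShortComplex.mk f g w).Exact) : (ShortComplex.mk f' g' w').Exact := by
  subst hf; subst hg; exact h

open ZeroObject in
lemma hasFiniteVDim_of_fres (hV : IsResolving V) :
    ∀ (n : ℕ) {M : C}, FRes V n M → HasFiniteVDim V M := by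
  intro n
  induction n with
  | zero =>
    intro M hM
    let Xf : ℕ → C := fun k => Nat.rec (motive := fun _ => C) M (fun _ _ => (0 : C)) k
    let df : ∀ k, Xf (k+1) ⟶ Xf k := fun _ => 0
    have hsq : ∀ k, df (k+1) ≫ df k = 0 := fun k => zero_comp
    let E : ChainComplex C ℕ := ChainComplex.of Xf df hsq
    have hd : ∀ k : ℕ, E.d (k+1) k = df k := fun k => ChainComplex.of_d Xf df k
    have h10 : E.d 1 0 = 0 := hd 0
    refine ⟨E, 𝟙 M, ⟨?_, ?_, ?_, ?_, ?_⟩, 0, ?_⟩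
    · intro k
      cases k with
      | zero => exact hM
      | succ k => exact hV.zero_mem _ (isZero_zero C)
    · have h : Epi (𝟙 M) := inferInstance
      exact h
    · rw [h10, zero_comp]
    · rw [ShortComplex.exact_iff_mono _ h10]
      have h : Mono (𝟙 M) := inferInstance
      exact h
    · intro k
      rw [HomologicalComplex.exactAt_iff' E (k+1+1) (k+1) k
        (by simp [ChainComplex.prev]) (by simp [ChainComplex.next_nat_succ])]
      exact ShortComplex.exact_of_isZero_X₂ _ (isZero_zero C)
    · intro k hk
      cases k with
      | zero => omega
      | succ k => exact isZero_zero C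
  | succ n ih =>
    rintro M ⟨P, p, hP, hp, hk⟩
    obtain ⟨L', ε', hres', Nb', hNb'⟩ := ih hk
    haveI := hres'.epi
    haveI := hp
    let Xf : ℕ → C := fun k => Nat.rec (motive := fun _ => C) P (fun k _ => L'.X k) k
    let df : ∀ k, Xf (k+1) ⟶ Xf k :=
      fun k => Nat.rec (motive := fun k => Xf (k+1) ⟶ Xf k) (ε' ≫ kernel.ι p) (fun k _ => L'.d (k+1) k) k
    have hsq : ∀ k, df (k+1) ≫ df k = 0 := by
      intro k
      cases k with
      | zero =>
        show L'.d 1 0 ≫ (ε' ≫ kernel.ι p) = 0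
        rw [← Category.assoc, hres'.comp_zero, zero_comp]
      | succ k =>
        show L'.d (k+1+1) (k+1) ≫ L'.d (k+1) k = 0
        exact L'.d_comp_d _ _ _
    let E : ChainComplex C ℕ := ChainComplex.of Xf df hsq
    have hd : ∀ k : ℕ, E.d (k+1) k = df k := fun k => ChainComplex.of_d Xf df k
    have h10 : E.d 1 0 = ε' ≫ kernel.ι p := hd 0
    have hcz : (ε' ≫ kernel.ι p) ≫ p = 0 := by
      rw [Category.assoc, kernel.condition, comp_zero]
    refine ⟨E, p, ⟨?_, hp, ?_, ?_, ?_⟩, Nb'+1, ?_⟩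
    · intro k
      cases k with
      | zero => exact hP
      | succ k => exact hres'.mem k
    · rw [h10, Category.assoc, kernel.condition, comp_zero]
    · exact exact_of_eq h10.symm rfl _ (tower_exact' p ε' hcz)
    · intro k
      rw [HomologicalComplex.exactAt_iff' E (k+1+1) (k+1) k
        (by simp [ChainComplex.prev]) (by simp [ChainComplex.next_nat_succ])]
      cases k with
      | zero =>
        exact exact_of_eq (hd 1).symm (hd 0).symm (E.d_comp_d _ _ _)
          ((exact_comp_mono_iff (L'.d 1 0) ε' (kernel.ι p) hres'.comp_zero (hsq 0)).2
            hres'.exact_zero)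
      | succ k =>
        have hsrc := hres'.exact k
        rw [HomologicalComplex.exactAt_iff' L' (k+1+1) (k+1) k
          (by simp [ChainComplex.prev]) (by simp [ChainComplex.next_nat_succ])] at hsrc
        exact exact_of_eq (hd (k+1+1)).symm (hd (k+1)).symm (E.d_comp_d _ _ _) hsrc
    · intro k hk
      cases k with
      | zero => omega
      | succ k => exact hNb' k (by omega)


lemma lemS (hV : IsResolving V) (hSyz : SyzygyHyp V) {P F : C} (p : P ⟶ F)
    (hp : Epi p) (hP : V P) (hF : ∃ m, FRes V m F) : ∃ m, FRes V m (kernel p) := by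
  have hFd : HasFiniteVDim V F := by
    obtain ⟨m, hm⟩ := hF
    exact hasFiniteVDim_of_fres hV m hm
  let tw : ℕ → Σ (K Q : C), (Q ⟶ K) := fun n =>
    Nat.rec (motive := fun _ => Σ (K Q : C), (Q ⟶ K)) ⟨F, P, p⟩
      (fun _ s => ⟨kernel s.2.2, (hV.epi_from (kernel s.2.2)).choose,
        (hV.epi_from (kernel s.2.2)).choose_spec.choose⟩) n
  let K : ℕ → C := fun n => (tw n).1
  let Q : ℕ → C := fun n => (tw n).2.1
  let q : ∀ n, Q n ⟶ K n := fun n => (tw n).2.2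
  have hq_epi : ∀ n, Epi (q n) := by
    intro n
    cases n with
    | zero => exact hp
    | succ n => exact (hV.epi_from (kernel (q n))).choose_spec.choose_spec.2
  have hQ_mem : ∀ n, V (Q n) := by
    intro n
    cases n with
    | zero => exact hP
    | succ n => exact (hV.epi_from (kernel (q n))).choose_spec.choose_spec.1
  let df : ∀ n, Q (n+1) ⟶ Q n := fun n => q (n+1) ≫ kernel.ι (q n)
  have hsq : ∀ n, df (n+1) ≫ df n = 0 := by
    intro n
    show (q (n+1+1) ≫ kernel.ι (q (n+1))) ≫ (q (n+1) ≫ kernel.ι (q n)) = 0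
    simp only [Category.assoc, kernel.condition_assoc, zero_comp, comp_zero]
  let E : ChainComplex C ℕ := ChainComplex.of Q df hsq
  have hd : ∀ n, E.d (n+1) n = df n := fun n => ChainComplex.of_d Q df n
  have hcz0 : (q 1 ≫ kernel.ι (q 0)) ≫ q 0 = 0 := by
    rw [Category.assoc, kernel.condition, comp_zero]
  have hres : IsVResolution V F E (q 0) := by
    refine ⟨hQ_mem, hq_epi 0, ?_, ?_, ?_⟩
    · rw [hd 0]
      exact hcz0
    · haveI := hq_epi 1
      exact exact_of_eq (hd 0).symm rfl _ (tower_exact' (q 0) (q 1) hcz0)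
    · intro n
      rw [HomologicalComplex.exactAt_iff' E (n+1+1) (n+1) n
        (by simp [ChainComplex.prev]) (by simp [ChainComplex.next_nat_succ])]
      haveI := hq_epi (n+1+1)
      refine exact_of_eq (hd (n+1)).symm (hd n).symm (E.d_comp_d _ _ _)
        (tower_exact (q (n+1)) (q (n+1+1)) (kernel.ι (q n)) ?_)
      simp only [Category.assoc, kernel.condition_assoc, zero_comp, comp_zero]
  obtain ⟨Nb, hNb⟩ := hSyz F E (q 0) hFd hres
  have hVK : V (kernel (q (Nb+1))) := by
    have h := hNb Nb le_rfl
    exact hV.iso_closed ((kernelIsoOfEq (hd Nb)).trans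
      (kernelCompMono (q (Nb+1)) (kernel.ι (q Nb)))) h
  have dstep : ∀ n k, FRes V k (K (n+1)) → FRes V (k+1) (K n) := by
    intro n k h
    exact ⟨Q n, q n, hQ_mem n, hq_epi n, h⟩
  have down : ∀ i j, FRes V 0 (K (j + i)) → FRes V i (K j) := by
    intro i
    induction i with
    | zero => exact fun j h => h
    | succ i ih =>
      intro j h
      have e : j + (i+1) = (j+1) + i := by omega
      rw [e] at h
      exact dstep j i (ih (j+1) h)
  have h0 : FRes V 0 (K (1 + (Nb+1))) := by
    have e : 1 + (Nb+1) = Nb + 1 + 1 := by omega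
    rw [e]
    exact hVK
  exact ⟨Nb+1, down (Nb+1) 1 h0⟩


lemma E0 (hV : IsResolving V) (hSyz : SyzygyHyp V) {B Cc : C} (h : B ⟶ Cc) (hh : Epi h)
    (hA : ∃ m, FRes V m (kernel h)) (hC : V Cc) : ∃ m, FRes V m B := by
  obtain ⟨U, u, hU, hu⟩ := hV.epi_from B
  haveI := hu; haveI := hh
  haveI : Epi (u ≫ h) := epi_comp _ _
  have hW : V (kernel (u ≫ h)) := hV.ker_of_epi_mem _ (shortExact_kernel_seq (u ≫ h)) hU hC
  obtain ⟨g, hg, ⟨e⟩⟩ := chase u h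
  have hkg : ∃ m, FRes V m (kernel g) := lemS hV hSyz g hg hW hA
  obtain ⟨m, hm⟩ := hkg
  exact ⟨m+1, U, u, hU, hu, fres_iso hV m e hm⟩

def EStmt (V : C → Prop) (n : ℕ) : Prop :=
  ∀ {B Cc : C} (h : B ⟶ Cc), Epi h → (∃ m, FRes V m (kernel h)) → FRes V n Cc →
    ∃ m, FRes V m B

lemma Q_of_E (hV : IsResolving V) (hSyz : SyzygyHyp V) (n : ℕ) (hE : EStmt V n)
    {B Cc : C} (g : B ⟶ Cc) (hg : Epi g) (hZ : FRes V n (kernel g))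
    (hB : ∃ m, FRes V m B) : ∃ m, FRes V m Cc := by
  obtain ⟨P, p, hP, hp⟩ := hV.epi_from B
  haveI := hp; haveI := hg
  obtain ⟨g', hg', ⟨e⟩⟩ := chase p g
  have hker_g' : ∃ m, FRes V m (kernel g') := by
    obtain ⟨m, hm⟩ := lemS hV hSyz p hp hP hB
    exact ⟨m, fres_iso hV m e.symm hm⟩
  obtain ⟨m, hm⟩ := hE g' hg' hker_g' hZ
  haveI : Epi (p ≫ g) := epi_comp _ _
  exact ⟨m+1, P, p ≫ g, hP, inferInstance, hm⟩

lemma Eall (hV : IsResolving V) (hSyz : SyzygyHyp V) : ∀ n, EStmt V n := by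
  intro n
  induction n with
  | zero =>
    intro B Cc h hh hA hC
    exact E0 hV hSyz h hh hA hC
  | succ n ih =>
    intro B Cc h hh hA hC
    obtain ⟨P0, e, hP0, he, hkere⟩ := hC
    haveI := hh; haveI := he
    haveI hsnd : Epi (pullback.snd h e) := inferInstance
    haveI hfst : Epi (pullback.fst h e) := inferInstance
    obtain ⟨es⟩ := kernel_pullback_snd h e
    obtain ⟨ef⟩ := kernel_pullback_fst h e
    have hD : ∃ m, FRes V m (pullback h e) := by
      apply E0 hV hSyz (pullback.snd h e) hsnd ?_ hP0
      obtain ⟨m, hm⟩ := hA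
      exact ⟨m, fres_iso hV m es.symm hm⟩
    exact Q_of_E hV hSyz n ih (pullback.fst h e) hfst (fres_iso hV n ef.symm hkere) hD

end Stmt10Aux

/-- Let `C` be an abelian category and `V` a resolving subcategory of
`C` satisfying the syzygy hypothesis.  If `f : M ⟶ N` is an epimorphism in `C` where
both `M` and `N` have finite `V`-dimension, then `ker f` has finite
`V`-dimension. -/
theorem stmt_10 {C : Type*} [Category C] [Abelian C]
    (V : C → Prop) (hV : IsResolving V) (hSyz : SyzygyHyp V)
    {M N : C} (f : M ⟶ N) (hf : Epi f)
    (hM : HasFiniteVDim V M) (hN : HasFiniteVDim V N) :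
    HasFiniteVDim V (kernel f) := by
  classical
  obtain ⟨mM, hmM⟩ := Stmt10Aux.fres_of_hasFiniteVDim hV hM
  have hNf : ∃ m, Stmt10Aux.FRes V m N := Stmt10Aux.fres_of_hasFiniteVDim hV hN
  haveI := hf
  cases mM with
  | zero =>
    obtain ⟨m, hm⟩ := Stmt10Aux.lemS hV hSyz f hf hmM hNf
    exact Stmt10Aux.hasFiniteVDim_of_fres hV m hm
  | succ k =>
    obtain ⟨L0, ε, hL0, hε, hkerε⟩ := hmM
    haveI := hε
    haveI : Epi (ε ≫ f) := epi_comp _ _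
    have hkere : ∃ m, Stmt10Aux.FRes V m (kernel (ε ≫ f)) :=
      Stmt10Aux.lemS hV hSyz (ε ≫ f) inferInstance hL0 hNf
    obtain ⟨g, hg, ⟨e⟩⟩ := Stmt10Aux.chase ε f
    obtain ⟨m, hm⟩ := Stmt10Aux.Q_of_E hV hSyz k (Stmt10Aux.Eall hV hSyz k) g hg
      (Stmt10Aux.fres_iso hV k e.symm hkerε) hkere
    exact Stmt10Aux.hasFiniteVDim_of_fres hV m hm
end
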